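/- arXiv:1105.2881 — 5 statements merged into one kernel-verified Lean document; each statement's English description precedes it below -/
import Mathlib

section
/- Let (F_t)_{t≥0} be a continuous one-parameter semigroup on Δ with Denjoy–Wolff point τ = 1 whose generator f admits the representation f(z) = b(z−1)² + R(z), where b ∈ ℂ and lim_{z→1, z∈Δ} R(z)/(z−1)² = 0. Then for every z ∈ Δ, lim_{t→∞} 1/(t·(1 − F_t(z))) = −b; that is, 1/(1 − F_t(z)) = −bt + G(z,t) with G(z,t)/t → 0 as t → ∞. -/
open Complex Filter Topology Set MeasureTheory

noncomputable section

/-- The open unit disk in the complex plane. -/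
def unitDisk : Set ℂ := {z : ℂ | ‖z‖ < 1}

/-- A continuous one-parameter semigroup `F` on the unit disk with
(infinitesimal) generator `f`: each `F t` is a holomorphic self-map of the disk,
`F 0 = id`, `F (t+s) = F t ∘ F s`, and for each `z` in the disk the trajectory
`t ↦ F t z` solves `∂F_t(z)/∂t + f(F_t(z)) = 0`. -/
structure IsContinuousSemigroupOnDisk (F : ℝ → ℂ → ℂ) (f : ℂ → ℂ) : Prop where
  mapsTo : ∀ t : ℝ, 0 ≤ t → Set.MapsTo (F t) unitDisk unitDisk
  holomorphic : ∀ t : ℝ, 0 ≤ t → DifferentiableOn ℂ (F t) unitDisk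
  init : ∀ z ∈ unitDisk, F 0 z = z
  semigroup : ∀ t s : ℝ, 0 ≤ t → 0 ≤ s → ∀ z ∈ unitDisk, F (t + s) z = F t (F s z)
  gen_holomorphic : DifferentiableOn ℂ f unitDisk
  ode : ∀ z ∈ unitDisk, ∀ t : ℝ, 0 ≤ t →
    HasDerivWithinAt (fun s : ℝ => F s z) (-(f (F t z))) (Set.Ici (0 : ℝ)) t

/-- The semigroup has Denjoy–Wolff point `τ = 1`. -/
def HasDWPointOne (F : ℝ → ℂ → ℂ) : Prop :=
  ∀ z ∈ unitDisk, Tendsto (fun t : ℝ => F t z) atTop (𝓝 (1 : ℂ))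

/-- `h` is the Koenigs function of the generator `f`: `h' = -1/f` on the disk and `h 0 = 0`. -/
def IsKoenigsFunction (f h : ℂ → ℂ) : Prop :=
  (∀ z ∈ unitDisk, HasDerivAt h (-(1 / f z)) z) ∧ h 0 = 0


lemma auxlim (g φ : ℝ → ℂ) (L : ℂ)
    (hg : ∀ t : ℝ, 0 ≤ t → HasDerivWithinAt g (φ t) (Set.Ici (0:ℝ)) t)
    (hφ : Tendsto φ atTop (𝓝 L)) :
    Tendsto (fun t : ℝ => g t / (t : ℂ)) atTop (𝓝 L) := by
  rw [Metric.tendsto_atTop]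
  intro ε hε
  obtain ⟨T₀, hT₀⟩ := Metric.tendsto_atTop.1 hφ (ε/2) (by positivity)
  set T : ℝ := max T₀ 1 with hT
  have hT1 : (1:ℝ) ≤ T := le_max_right _ _
  have hT0 : (0:ℝ) ≤ T := by linarith
  set h : ℝ → ℂ := fun s => g s - s • L with hh
  have hd : ∀ s ∈ Set.Ici T, HasDerivWithinAt h (φ s - L) (Set.Ici T) s := by
    intro s hs
    have h1 : HasDerivWithinAt g (φ s) (Set.Ici T) s :=
      (hg s (le_trans hT0 hs)).mono (Set.Ici_subset_Ici.2 hT0)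
    have h2 : HasDerivAt (fun s : ℝ => s • L) L s := by
      simpa using (hasDerivAt_id s).smul_const L
    exact h1.sub h2.hasDerivWithinAt
  have hbound : ∀ s ∈ Set.Ici T, ‖φ s - L‖ ≤ ε/2 := by
    intro s hs
    have := hT₀ s (le_trans (le_max_left _ _) hs)
    rw [dist_eq_norm] at this
    exact this.le
  have key : ∀ t ∈ Set.Ici T, ‖h t - h T‖ ≤ ε/2 * ‖t - T‖ :=
    fun t ht => (convex_Ici T).norm_image_sub_le_of_norm_hasDerivWithin_le hd hbound
      (Set.self_mem_Ici) ht
  refine ⟨max T (2 * ‖h T‖ / ε + 1), fun t ht => ?_⟩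
  have htT : T ≤ t := le_trans (le_max_left _ _) ht
  have ht2 : 2 * ‖h T‖ / ε + 1 ≤ t := le_trans (le_max_right _ _) ht
  have ht0 : (0:ℝ) < t := by linarith
  have h1 : ‖h t - h T‖ ≤ ε/2 * (t - T) := by
    have := key t htT
    rwa [Real.norm_eq_abs, _root_.abs_of_nonneg (by linarith)] at this
  have h2 : ‖g t - t • L‖ ≤ ε/2 * t + ‖h T‖ := by
    calc ‖g t - t • L‖ = ‖(h t - h T) + h T‖ := by rw [hh]; ring_nf
      _ ≤ ‖h t - h T‖ + ‖h T‖ := norm_add_le _ _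
      _ ≤ ε/2 * (t - T) + ‖h T‖ := by linarith
      _ ≤ ε/2 * t + ‖h T‖ := by nlinarith
  have heq : g t / (t:ℂ) - L = (g t - t • L) / (t:ℂ) := by
    have htne : (t:ℂ) ≠ 0 := by exact_mod_cast ht0.ne'
    field_simp [Complex.real_smul]
    rw [Complex.real_smul]
  rw [dist_eq_norm, heq, norm_div]
  have hnt : ‖(t:ℂ)‖ = t := by
    rw [Complex.norm_real, Real.norm_eq_abs, abs_of_pos ht0]
  rw [hnt, div_lt_iff₀ ht0]
  have hHT : ‖h T‖ < ε/2 * t := by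
    have : 2 * ‖h T‖ / ε < t := by linarith
    have := (div_lt_iff₀ hε).1 this
    nlinarith
  nlinarith

theorem stmt5 (F : ℝ → ℂ → ℂ) (f : ℂ → ℂ) (b : ℂ)
    (hsg : IsContinuousSemigroupOnDisk F f)
    (hdw : HasDWPointOne F)
    (hrep : Tendsto (fun z : ℂ => (f z - b * (z - 1) ^ 2) / (z - 1) ^ 2)
      (𝓝[unitDisk] (1 : ℂ)) (𝓝 0)) :
    ∀ z ∈ unitDisk,
      Tendsto (fun t : ℝ => 1 / ((t : ℂ) * (1 - F t z))) atTop (𝓝 (-b)) := by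
  intro z hz
  have hmem : ∀ t : ℝ, 0 ≤ t → F t z ∈ unitDisk := fun t ht => hsg.mapsTo t ht hz
  have hode := fun t ht => hsg.ode z hz t ht
  have hdwz := hdw z hz
  have hne1 : ∀ t : ℝ, 0 ≤ t → F t z ≠ 1 := by
    intro t ht heq
    have := hmem t ht
    rw [heq] at this
    simp [unitDisk] at this
  set g : ℝ → ℂ := fun s => (1 - F s z)⁻¹ with hg
  set φ : ℝ → ℂ := fun t => -b - (f (F t z) - b * (F t z - 1) ^ 2) / (F t z - 1) ^ 2 with hφdef
  have hderiv : ∀ t : ℝ, 0 ≤ t → HasDerivWithinAt g (φ t) (Set.Ici (0:ℝ)) t := by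
    intro t ht
    have hne : (1 : ℂ) - F t z ≠ 0 := sub_ne_zero.2 (fun h => hne1 t ht h.symm)
    have hc : HasDerivAt (fun w : ℂ => (1 - w)⁻¹) (-(-1) / (1 - F t z) ^ 2) (F t z) :=
      ((hasDerivAt_id (F t z)).const_sub 1).inv hne
    have := hc.comp_hasDerivWithinAt t (hode t ht)
    refine this.congr_deriv ?_
    have hne' : F t z - 1 ≠ 0 := sub_ne_zero.2 (hne1 t ht)
    rw [hφdef]
    field_simp
    ring
  have hφ : Tendsto φ atTop (𝓝 (-b)) := by
    have hF1 : Tendsto (fun t : ℝ => F t z) atTop (𝓝[unitDisk] (1 : ℂ)) := by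
      rw [tendsto_nhdsWithin_iff]
      exact ⟨hdwz, (eventually_ge_atTop 0).mono fun t ht => hmem t ht⟩
    have h2 := (tendsto_const_nhds (x := -b)).sub (hrep.comp hF1)
    rw [sub_zero] at h2
    exact h2
  have hmain := auxlim g φ (-b) hderiv hφ
  refine hmain.congr' ?_
  filter_upwards [eventually_gt_atTop (0:ℝ)] with t ht
  have htne : (t : ℂ) ≠ 0 := by exact_mod_cast ht.ne'
  rw [hg]
  simp [mul_inv, div_eq_mul_inv, mul_comm]
end
end

section
/- Let (F_t)_{t≥0} be a continuous one-parameter semigroup on Δ with Denjoy–Wolff point τ = 1 whose generator f has no zeros in Δ and admits the representation f(z) = b(z−1)² + R(z), where b ∈ ℂ and lim_{z→1, z∈Δ} R(z)/(z−1)² = 0. Let h be the Koenigs function of f. Then for every z ∈ Δ, lim_{t→∞} ( 1/(1 − F_t(z)) − 1/(1 − F_t(0)) ) = −b·h(z). -/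
open Complex Filter Topology Set MeasureTheory

noncomputable section

lemma unitDisk_eq_ball : unitDisk = Metric.ball (0:ℂ) 1 := by
  ext z; simp [unitDisk, Complex.dist_eq]

lemma isOpen_unitDisk : IsOpen unitDisk := by
  rw [unitDisk_eq_ball]; exact Metric.isOpen_ball

lemma mobius_lt {a c : ℂ} (ha : ‖a‖ < 1) (hc : ‖c‖ < 1) :
    ‖(a - c)‖ < ‖(1 - (starRingEnd ℂ) c * a)‖ := by
  have key : Complex.normSq (1 - (starRingEnd ℂ) c * a) - Complex.normSq (a - c)
      = (1 - Complex.normSq a) * (1 - Complex.normSq c) := by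
    simp only [Complex.normSq_apply, Complex.sub_re, Complex.sub_im, Complex.mul_re,
      Complex.mul_im, Complex.conj_re, Complex.conj_im, Complex.one_re, Complex.one_im]
    ring
  have ha2 : Complex.normSq a < 1 := by
    rw [← Complex.sq_norm]; nlinarith [norm_nonneg a]
  have hc2 : Complex.normSq c < 1 := by
    rw [← Complex.sq_norm]; nlinarith [norm_nonneg c]
  have hlt : Complex.normSq (a - c) < Complex.normSq (1 - (starRingEnd ℂ) c * a) := by nlinarith
  calc ‖(a - c)‖ = Real.sqrt (Complex.normSq (a - c)) := Complex.norm_def _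
    _ < Real.sqrt (Complex.normSq (1 - (starRingEnd ℂ) c * a)) :=
        Real.sqrt_lt_sqrt (Complex.normSq_nonneg _) hlt
    _ = _ := (Complex.norm_def _).symm

lemma schwarz_pick_zero {g : ℂ → ℂ} (hd : DifferentiableOn ℂ g (Metric.ball 0 1))
    (hm : Set.MapsTo g (Metric.ball 0 1) (Metric.ball 0 1)) {w : ℂ} (hw : ‖w‖ < 1) :
    ‖(g w - g 0)‖ ≤ ‖w‖ * ‖(1 - (starRingEnd ℂ) (g 0) * g w)‖ := by
  have habs : ∀ x ∈ Metric.ball (0:ℂ) 1, ‖x‖ < 1 := by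
    intro x hx; simpa [Complex.dist_eq] using hx
  have h0 : (0:ℂ) ∈ Metric.ball (0:ℂ) 1 := by simp
  set c := g 0 with hcdef
  have hc : ‖c‖ < 1 := habs _ (hm h0)
  have hden : ∀ x : ℂ, ‖x‖ < 1 → 1 - (starRingEnd ℂ) c * x ≠ 0 := by
    intro x hx H
    have h1 : (1:ℂ) = (starRingEnd ℂ) c * x := by
      have := sub_eq_zero.mp H; linear_combination this
    have h2 : (1:ℝ) = ‖c‖ * ‖x‖ := by
      calc (1:ℝ) = ‖((starRingEnd ℂ) c * x)‖ := by rw [← h1]; simp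
        _ = ‖c‖ * ‖x‖ := by rw [norm_mul, Complex.norm_conj]
    nlinarith [norm_nonneg x, norm_nonneg c]
  set G : ℂ → ℂ := fun x => (g x - c) / (1 - (starRingEnd ℂ) c * g x) with hGdef
  have hGd : DifferentiableOn ℂ G (Metric.ball 0 1) := by
    refine DifferentiableOn.div (hd.sub (differentiableOn_const c))
      ((differentiableOn_const 1).sub ((differentiableOn_const _).mul hd)) ?_
    intro x hx; exact hden _ (habs _ (hm hx))
  have hGm : Set.MapsTo G (Metric.ball 0 1) (Metric.ball 0 1) := by
    intro x hx
    have hgx : ‖(g x)‖ < 1 := habs _ (hm hx)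
    have hpos : 0 < ‖(1 - (starRingEnd ℂ) c * g x)‖ :=
      norm_pos_iff.mpr (hden _ hgx)
    simp only [Metric.mem_ball, Complex.dist_eq, sub_zero, hGdef, norm_div]
    rw [div_lt_one hpos]
    exact mobius_lt hgx hc
  have hG0 : G 0 = 0 := by simp [hGdef, ← hcdef]
  have hs := Complex.norm_le_norm_of_mapsTo_ball hGd (hGm.mono_right Metric.ball_subset_closedBall) hG0 hw
  have hgw : ‖(g w)‖ < 1 := habs _ (hm (by simpa [Complex.dist_eq] using hw))
  have hpos : 0 < ‖(1 - (starRingEnd ℂ) c * g w)‖ := norm_pos_iff.mpr (hden _ hgw)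
  rw [hGdef] at hs
  simp only [norm_div] at hs
  rw [div_le_iff₀ hpos] at hs
  exact hs

lemma dist_one_bound {a c : ℂ} {r : ℝ} (ha : ‖a‖ < 1) (hc : ‖c‖ < 1)
    (hr0 : 0 ≤ r) (hr : r < 1)
    (hd : ‖(a - c)‖ ≤ r * ‖(1 - (starRingEnd ℂ) c * a)‖) :
    ‖(1 - a)‖ ≤ (1 + 2 * r / (1 - r)) * ‖(1 - c)‖ := by
  have habs_sub : ‖(c - a)‖ = ‖(a - c)‖ := by
    rw [← Complex.dist_eq, dist_comm, Complex.dist_eq]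
  have hnsq : Complex.normSq c < 1 := by
    rw [← Complex.sq_norm]; nlinarith [norm_nonneg c]
  have h2 : ‖(1 - (starRingEnd ℂ) c * a)‖
      ≤ (1 - Complex.normSq c) + ‖(a - c)‖ := by
    have h1 : (1:ℂ) - (starRingEnd ℂ) c * a
        = (1 - (Complex.normSq c : ℂ)) + (starRingEnd ℂ) c * (c - a) := by
      have e1 : ((Complex.normSq c : ℂ)) = c * (starRingEnd ℂ) c := (Complex.mul_conj c).symm
      rw [e1]; ring
    rw [h1]
    refine le_trans (norm_add_le _ _) ?_
    have e2 : ‖(1 - (Complex.normSq c : ℂ))‖ = 1 - Complex.normSq c := by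
      rw [show (1 : ℂ) - (Complex.normSq c : ℂ) = ((1 - Complex.normSq c : ℝ) : ℂ) by push_cast; ring]
      rw [Complex.norm_real, Real.norm_eq_abs, _root_.abs_of_nonneg (by linarith)]
    have e3 : ‖((starRingEnd ℂ) c * (c - a))‖ ≤ ‖(a - c)‖ := by
      rw [norm_mul, Complex.norm_conj, habs_sub]
      nlinarith [norm_nonneg (a - c), norm_nonneg c]
    linarith
  have h3 : ‖(a - c)‖ ≤ r * ((1 - Complex.normSq c) + ‖(a - c)‖) :=
    le_trans hd (mul_le_mul_of_nonneg_left h2 hr0)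
  have h1r : (0:ℝ) < 1 - r := by linarith
  have h5 : ‖(a - c)‖ ≤ r / (1 - r) * (1 - Complex.normSq c) := by
    rw [div_mul_eq_mul_div, le_div_iff₀ h1r]
    nlinarith
  have h6 : 1 - Complex.normSq c ≤ 2 * ‖(1 - c)‖ := by
    have t1 : ‖(1:ℂ)‖ - ‖c‖ ≤ ‖(1:ℂ) - c‖ := norm_sub_norm_le _ _
    simp only [norm_one] at t1
    have t2 : Complex.normSq c = ‖c‖ ^ 2 := (Complex.sq_norm c).symm
    nlinarith [norm_nonneg c]
  have h7 : ‖(1 - a)‖ ≤ ‖(1 - c)‖ + ‖(a - c)‖ := by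
    calc ‖(1 - a)‖ = ‖((1 - c) + (c - a))‖ := by ring_nf
      _ ≤ ‖(1 - c)‖ + ‖(c - a)‖ := norm_add_le _ _
      _ = ‖(1 - c)‖ + ‖(a - c)‖ := by rw [habs_sub]
  have hrr : 0 ≤ r / (1 - r) := div_nonneg hr0 (le_of_lt h1r)
  have hgoal : 1 + 2 * r / (1 - r) = 1 + 2 * (r / (1 - r)) := by ring
  rw [hgoal]
  nlinarith [norm_nonneg (1 - c), mul_le_mul_of_nonneg_left h6 hrr]
theorem stmt6 (F : ℝ → ℂ → ℂ) (f h : ℂ → ℂ) (b : ℂ)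
    (hsg : IsContinuousSemigroupOnDisk F f)
    (hdw : HasDWPointOne F)
    (hnz : ∀ z ∈ unitDisk, f z ≠ 0)
    (hrep : Tendsto (fun z : ℂ => (f z - b * (z - 1) ^ 2) / (z - 1) ^ 2)
      (𝓝[unitDisk] (1 : ℂ)) (𝓝 0))
    (hK : IsKoenigsFunction f h) :
    ∀ z ∈ unitDisk,
      Tendsto (fun t : ℝ => 1 / (1 - F t z) - 1 / (1 - F t 0)) atTop
        (𝓝 (-b * h z)) := by
  intro z hz
  obtain ⟨hK1, hK2⟩ := hK
  have hz' : ‖z‖ < 1 := hz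
  have mem0 : (0:ℂ) ∈ unitDisk := by simp [unitDisk]
  have memF : ∀ t : ℝ, 0 ≤ t → ∀ w ∈ unitDisk, F t w ∈ unitDisk :=
    fun t ht w hw => hsg.mapsTo t ht hw
  -- Step 1: the Koenigs flow identity `h (F t w) = h w + t`.
  have key : ∀ w ∈ unitDisk, ∀ t : ℝ, 0 ≤ t → h (F t w) = h w + t := by
    intro w hw t ht
    have hcont : ContinuousOn (fun s : ℝ => h (F s w) - (s:ℂ)) (Icc 0 t) := by
      intro s hs
      have c1 : ContinuousWithinAt (fun s' : ℝ => F s' w) (Icc 0 t) s :=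
        ((hsg.ode w hw s hs.1).continuousWithinAt).mono Icc_subset_Ici_self
      have c2 : ContinuousWithinAt (h ∘ fun s' : ℝ => F s' w) (Icc 0 t) s :=
        ContinuousAt.comp_continuousWithinAt
          (by exact (hK1 _ (memF s hs.1 w hw)).continuousAt) c1
      exact c2.sub Complex.continuous_ofReal.continuousWithinAt
    have hderiv : ∀ x ∈ Ico (0:ℝ) t,
        HasDerivWithinAt (fun s : ℝ => h (F s w) - (s:ℂ)) 0 (Ici x) x := by
      intro x hx
      have hin : HasDerivWithinAt (fun s : ℝ => F s w) (-(f (F x w))) (Ici x) x :=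
        (hsg.ode w hw x hx.1).mono (Ici_subset_Ici.mpr hx.1)
      have hcomp := (hK1 (F x w) (memF x hx.1 w hw)).comp_hasDerivWithinAt x hin
      have hc1 : HasDerivWithinAt (fun s : ℝ => h (F s w)) 1 (Ici x) x := by
        have hval : (-(1 / f (F x w))) * (-(f (F x w))) = 1 := by
          have := hnz (F x w) (memF x hx.1 w hw); field_simp
        rw [← hval]; exact hcomp
      have hid : HasDerivWithinAt (fun s : ℝ => (s:ℂ)) 1 (Ici x) x := by
        exact (Complex.ofRealCLM.hasDerivAt (x := x)).hasDerivWithinAt.congr_deriv (by simp)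
      exact (hc1.sub hid).congr_deriv (sub_self _)
    have hconst := constant_of_has_deriv_right_zero hcont hderiv t ⟨ht, le_rfl⟩
    rw [hsg.init w hw] at hconst
    simp only [Complex.ofReal_zero, sub_zero] at hconst
    linear_combination hconst
  -- Step 2: the space derivative of `F t` is `f (F t w) / f w`.
  have hFderiv : ∀ t : ℝ, 0 ≤ t → ∀ w ∈ unitDisk,
      HasDerivAt (F t) (f (F t w) / f w) w := by
    intro t ht w hw
    have hdiff : DifferentiableAt ℂ (F t) w :=
      (hsg.holomorphic t ht).differentiableAt (isOpen_unitDisk.mem_nhds hw)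
    obtain ⟨d, hd⟩ : ∃ d, HasDerivAt (F t) d w := ⟨_, hdiff.hasDerivAt⟩
    have hcomp : HasDerivAt (fun x => h (F t x)) (-(1 / f (F t w)) * d) w :=
      (hK1 (F t w) (memF t ht w hw)).comp w hd
    have heq : (fun x => h (F t x)) =ᶠ[𝓝 w] fun x => h x + (t:ℂ) :=
      eventually_of_mem (isOpen_unitDisk.mem_nhds hw) (fun x hx => key x hx t ht)
    have h2 : HasDerivAt (fun x => h x + (t:ℂ)) (-(1 / f (F t w)) * d) w :=
      hcomp.congr_of_eventuallyEq heq.symm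
    have h3 : HasDerivAt (fun x => h x + (t:ℂ)) (-(1 / f w)) w := (hK1 w hw).add_const _
    have huniq : -(1 / f (F t w)) * d = -(1 / f w) := h2.unique h3
    have hfw := hnz w hw
    have hfFw := hnz (F t w) (memF t ht w hw)
    have hdval : d = f (F t w) / f w := by
      field_simp at huniq ⊢
      linear_combination -huniq
    rwa [← hdval]
  -- constants
  set r : ℝ := ‖z‖ with hrdef
  have hr0 : 0 ≤ r := norm_nonneg z
  have hr1 : r < 1 := hz'
  set K : ℝ := 1 + 2 * r / (1 - r) with hKdef
  have hK0 : 0 < K := by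
    have h1 : (0:ℝ) ≤ 2 * r / (1 - r) := div_nonneg (by linarith) (by linarith)
    rw [hKdef]; linarith
  have hseg : ∀ s : ℝ, s ∈ Icc (0:ℝ) 1 → ((s:ℂ) * z) ∈ unitDisk := by
    intro s hs
    show ‖((s:ℂ) * z)‖ < 1
    rw [norm_mul, Complex.norm_real, Real.norm_eq_abs, _root_.abs_of_nonneg hs.1]
    nlinarith [hs.2]
  have hcontf : ContinuousOn (fun s : ℝ => ‖(f ((s:ℂ) * z))‖) (Icc 0 1) := by
    apply continuous_norm.comp_continuousOn
    apply hsg.gen_holomorphic.continuousOn.comp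
    · exact (Complex.continuous_ofReal.mul continuous_const).continuousOn
    · intro s hs; exact hseg s hs
  obtain ⟨s₀, hs₀, hmin⟩ := isCompact_Icc.exists_isMinOn (nonempty_Icc.mpr zero_le_one) hcontf
  set m : ℝ := ‖(f ((s₀:ℂ) * z))‖ with hmdef
  have hm0 : 0 < m := norm_pos_iff.mpr (hnz _ (hseg s₀ hs₀))
  have hmle : ∀ s : ℝ, s ∈ Icc (0:ℝ) 1 → m ≤ ‖(f ((s:ℂ) * z))‖ :=
    fun s hs => hmin hs
  -- main limit
  have main : Tendsto (fun t : ℝ => (1 / (1 - F t z) - 1 / (1 - F t 0)) + b * h z)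
      atTop (𝓝 0) := by
    rw [Metric.tendsto_atTop]
    intro ε hε
    set ε' : ℝ := ε * m / (r + 1) with hε'def
    have hε'0 : 0 < ε' := div_pos (mul_pos hε hm0) (by linarith)
    rw [Metric.tendsto_nhdsWithin_nhds] at hrep
    obtain ⟨δ, hδ0, hδ⟩ := hrep ε' hε'0
    obtain ⟨T₀, hT₀⟩ := Metric.tendsto_atTop.mp (hdw 0 mem0) (δ / K) (div_pos hδ0 hK0)
    refine ⟨max T₀ 0, fun t ht => ?_⟩
    have htT : T₀ ≤ t := le_trans (le_max_left _ _) ht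
    have ht0 : (0:ℝ) ≤ t := le_trans (le_max_right _ _) ht
    have hFz_mem : ∀ s ∈ Icc (0:ℝ) 1, F t ((s:ℂ)*z) ∈ unitDisk :=
      fun s hs => memF t ht0 _ (hseg s hs)
    -- uniform closeness to 1
    have hclose : ∀ s ∈ Icc (0:ℝ) 1, ‖(F t ((s:ℂ)*z) - 1)‖ < δ := by
      intro s hs
      have hW : ‖(F t ((s:ℂ)*z))‖ < 1 := hFz_mem s hs
      have hc : ‖(F t 0)‖ < 1 := memF t ht0 0 mem0
      have hd' : DifferentiableOn ℂ (F t) (Metric.ball 0 1) := by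
        rw [← unitDisk_eq_ball]; exact hsg.holomorphic t ht0
      have hm' : Set.MapsTo (F t) (Metric.ball 0 1) (Metric.ball 0 1) := by
        rw [← unitDisk_eq_ball]; exact hsg.mapsTo t ht0
      have habsw : ‖((s:ℂ)*z)‖ < 1 := hseg s hs
      have hsp := schwarz_pick_zero hd' hm' habsw
      have habsw_le : ‖((s:ℂ)*z)‖ ≤ r := by
        rw [norm_mul, Complex.norm_real, Real.norm_eq_abs, _root_.abs_of_nonneg hs.1]
        nlinarith [hs.2, hr0]
      have hsp2 : ‖(F t ((s:ℂ)*z) - F t 0)‖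
          ≤ r * ‖(1 - (starRingEnd ℂ) (F t 0) * F t ((s:ℂ)*z))‖ :=
        le_trans hsp (mul_le_mul_of_nonneg_right habsw_le (norm_nonneg _))
      have hbound := dist_one_bound hW hc hr0 hr1 hsp2
      have hdist0 : ‖(F t 0 - 1)‖ < δ / K := by
        have := hT₀ t htT; rwa [Complex.dist_eq] at this
      have e1 : ‖(1 - F t 0)‖ = ‖(F t 0 - 1)‖ := by
        rw [← Complex.dist_eq, dist_comm, Complex.dist_eq]
      have e2 : ‖(F t ((s:ℂ)*z) - 1)‖ = ‖(1 - F t ((s:ℂ)*z))‖ := by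
        rw [← Complex.dist_eq, dist_comm, Complex.dist_eq]
      rw [e2]
      calc ‖(1 - F t ((s:ℂ)*z))‖ ≤ K * ‖(1 - F t 0)‖ := hbound
        _ < K * (δ / K) := by
            rw [e1]; exact mul_lt_mul_of_pos_left hdist0 hK0
        _ = δ := by field_simp
    -- the auxiliary path function and its derivative
    set Λ : ℝ → ℂ := fun s : ℝ => (1 - F t ((s:ℂ)*z))⁻¹ + b * h (F t ((s:ℂ)*z)) with hΛdef
    set Λ' : ℝ → ℂ := fun s : ℝ =>
      ((f (F t ((s:ℂ)*z)) - b * (F t ((s:ℂ)*z) - 1)^2) / (F t ((s:ℂ)*z) - 1)^2) * z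
        / f ((s:ℂ)*z) with hΛ'def
    have hΛderiv : ∀ s ∈ Icc (0:ℝ) 1, HasDerivWithinAt Λ (Λ' s) (Icc 0 1) s := by
      intro s hs
      have hw_mem : ((s:ℂ) * z) ∈ unitDisk := hseg s hs
      have hW_mem : F t ((s:ℂ) * z) ∈ unitDisk := memF t ht0 _ hw_mem
      have hfw : f ((s:ℂ) * z) ≠ 0 := hnz _ hw_mem
      have hfW : f (F t ((s:ℂ) * z)) ≠ 0 := hnz _ hW_mem
      have hW1 : (1:ℂ) - F t ((s:ℂ) * z) ≠ 0 := by
        intro H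
        have hEq : F t ((s:ℂ) * z) = 1 := by linear_combination -H
        have hlt : ‖(F t ((s:ℂ) * z))‖ < 1 := hW_mem
        rw [hEq] at hlt; simp at hlt
      have hW1' : F t ((s:ℂ) * z) - 1 ≠ 0 := by
        intro H; exact hW1 (by linear_combination -H)
      have hmul : HasDerivAt (fun ζ : ℂ => ζ * z) z (s:ℂ) := by
        simpa using (hasDerivAt_id ((s:ℂ))).mul_const z
      have hFz : HasDerivAt (fun ζ : ℂ => F t (ζ * z))
          (f (F t ((s:ℂ) * z)) / f ((s:ℂ) * z) * z) (s:ℂ) :=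
        (hFderiv t ht0 _ hw_mem).comp (s:ℂ) hmul
      have hsub : HasDerivAt (fun ζ : ℂ => 1 - F t (ζ * z))
          (-(f (F t ((s:ℂ) * z)) / f ((s:ℂ) * z) * z)) (s:ℂ) := by
        exact ((hasDerivAt_const ((s:ℂ)) (1:ℂ)).sub hFz).congr_deriv (zero_sub _)
      have hT1 : HasDerivAt (fun ζ : ℂ => (1 - F t (ζ * z))⁻¹)
          (-(-(f (F t ((s:ℂ) * z)) / f ((s:ℂ) * z) * z)) / (1 - F t ((s:ℂ) * z))^2)
          (s:ℂ) := hsub.inv hW1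
      have hT2 : HasDerivAt (fun ζ : ℂ => b * h (F t (ζ * z)))
          (b * (-(1 / f (F t ((s:ℂ) * z))) * (f (F t ((s:ℂ) * z)) / f ((s:ℂ) * z) * z)))
          (s:ℂ) := ((hK1 _ hW_mem).comp (s:ℂ) hFz).const_mul b
      have hsum := hT1.add hT2
      have hval : -(-(f (F t ((s:ℂ) * z)) / f ((s:ℂ) * z) * z)) / (1 - F t ((s:ℂ) * z))^2
          + b * (-(1 / f (F t ((s:ℂ) * z))) * (f (F t ((s:ℂ) * z)) / f ((s:ℂ) * z) * z))
          = Λ' s := by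
        rw [hΛ'def]
        field_simp
        ring
      rw [hval] at hsum
      exact hsum.comp_ofReal.hasDerivWithinAt
    -- bound on the derivative
    have hbound' : ∀ s ∈ Ico (0:ℝ) 1, ‖Λ' s‖ ≤ ε' * r / m := by
      intro s hs
      have hs' : s ∈ Icc (0:ℝ) 1 := Ico_subset_Icc_self hs
      have hWm := hFz_mem s hs'
      have hq : ‖((f (F t ((s:ℂ)*z)) - b * (F t ((s:ℂ)*z) - 1)^2)
          / (F t ((s:ℂ)*z) - 1)^2)‖ < ε' := by
        have hdd := hδ hWm (by rw [Complex.dist_eq]; exact hclose s hs')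
        rwa [dist_zero_right] at hdd
      rw [hΛ'def]
      rw [norm_div, norm_mul]
      have hnum : ‖((f (F t ((s:ℂ)*z)) - b * (F t ((s:ℂ)*z) - 1)^2)
          / (F t ((s:ℂ)*z) - 1)^2)‖ * ‖z‖ ≤ ε' * r :=
        mul_le_mul (le_of_lt hq) le_rfl (norm_nonneg z) (le_of_lt hε'0)
      exact div_le_div₀ (by positivity) hnum hm0 (hmle s hs')
    have hMVT := norm_image_sub_le_of_norm_deriv_le_segment' hΛderiv hbound' 1
      (right_mem_Icc.mpr zero_le_one)
    -- identify Λ 1 - Λ 0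
    have e1 : ((1:ℝ):ℂ) * z = z := by norm_num
    have e0 : ((0:ℝ):ℂ) * z = (0:ℂ) := by norm_num
    have k1 : h (F t z) = h z + t := key z hz t ht0
    have k0 : h (F t 0) = (t:ℂ) := by
      have hh := key 0 mem0 t ht0; rw [hK2] at hh; simpa using hh
    have hΛ10 : Λ 1 - Λ 0 = (1 / (1 - F t z) - 1 / (1 - F t 0)) + b * h z := by
      rw [hΛdef]
      simp only [e1, e0]
      rw [k1, k0, one_div, one_div]
      ring
    have hC : ε' * r / m < ε := by
      have hrr1 : (0:ℝ) < r + 1 := by linarith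
      have heq2 : ε' * r / m = ε * (r / (r + 1)) := by
        rw [hε'def]; field_simp
      rw [heq2]
      have hlt1 : r / (r+1) < 1 := by rw [div_lt_one hrr1]; linarith
      nlinarith
    have hfin : ‖(1 / (1 - F t z) - 1 / (1 - F t 0)) + b * h z‖ < ε := by
      rw [← hΛ10]
      calc ‖Λ 1 - Λ 0‖ ≤ ε' * r / m * (1 - 0) := hMVT
        _ = ε' * r / m := by ring
        _ < ε := hC
    simpa [dist_zero_right] using hfin
  have hsub := main.sub_const (b * h z)
  simp only [add_sub_cancel_right, zero_sub] at hsub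
  simpa [neg_mul] using hsub
end
end

section
/- Let (F_t)_{t≥0} be a continuous one-parameter semigroup on Δ with Denjoy–Wolff point τ = 1 whose generator f admits the representation f(z) = b(z−1)² + c(z−1)³ + R₁(z), where b, c ∈ ℂ, b ≠ 0, and lim_{z→1, z∈Δ} R₁(z)/(z−1)³ = 0. Then for every z ∈ Δ, lim_{t→∞} ( 1/(1 − F_t(z)) + bt + (c/b)·log(t+1) ) / log(t+1) = 0; that is, 1/(1 − F_t(z)) = −bt − (c/b)log(t+1) + G₁(z,t) with G₁(z,t)/log(t+1) → 0 as t → ∞. -/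
open Complex Filter Topology Set MeasureTheory

noncomputable section

/-- integral of `1/(s+1)`. -/
lemma integral_inv_add_one {a t : ℝ} (ha : 0 ≤ a) (h : a ≤ t) :
    ∫ s in a..t, (s + 1)⁻¹ = Real.log (t + 1) - Real.log (a + 1) := by
  have : ∀ x ∈ Set.uIcc a t, HasDerivAt (fun s : ℝ => Real.log (s + 1)) (x + 1)⁻¹ x := by
    intro x hx
    rw [Set.uIcc_of_le h] at hx
    have hx1 : x + 1 ≠ 0 := by nlinarith [hx.1]
    have := (Real.hasDerivAt_log hx1).comp x ((hasDerivAt_id x).add_const 1)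
    rw [mul_one] at this
    exact this
  rw [intervalIntegral.integral_eq_sub_of_hasDerivAt this]
  · exact ContinuousOn.intervalIntegrable (by
      apply ContinuousOn.inv₀
      · fun_prop
      · intro x hx
        rw [Set.uIcc_of_le h] at hx
        nlinarith [hx.1])

/-- Cesàro-type lemma: if `φ → 0` then the average of its integral tends to `0`. -/
lemma cesaro (φ : ℝ → ℂ) (hi : ∀ t, 0 ≤ t → IntervalIntegrable φ volume 0 t)
    (h : Tendsto φ atTop (𝓝 0)) :
    Tendsto (fun t : ℝ => (∫ s in (0:ℝ)..t, φ s) / (t : ℂ)) atTop (𝓝 0) := by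
  rw [NormedAddCommGroup.tendsto_nhds_zero]
  intro ε hε
  have h2 : ∀ᶠ s in atTop, ‖φ s‖ < ε / 2 := by
    have := h.norm
    simp only [norm_zero] at this
    exact this.eventually_lt_const (by positivity)
  obtain ⟨T₀, hT₀⟩ := eventually_atTop.1 h2
  set T := max T₀ 0 with hTdef
  have hT0 : 0 ≤ T := le_max_right _ _
  set C := ‖∫ s in (0:ℝ)..T, φ s‖ with hCdef
  have hC0 : 0 ≤ C := norm_nonneg _
  filter_upwards [eventually_ge_atTop (max T 1), eventually_gt_atTop (2 * C / ε)]
    with t ht1 ht2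
  have htT : T ≤ t := le_trans (le_max_left _ _) ht1
  have ht1' : (1:ℝ) ≤ t := le_trans (le_max_right _ _) ht1
  have htpos : 0 < t := lt_of_lt_of_le one_pos ht1'
  have hsplit : (∫ s in (0:ℝ)..t, φ s) = (∫ s in (0:ℝ)..T, φ s) + ∫ s in T..t, φ s := by
    rw [intervalIntegral.integral_add_adjacent_intervals (hi T hT0)]
    exact (hi t htpos.le).mono_set (by
      rw [Set.uIcc_of_le htT, Set.uIcc_of_le htpos.le]
      exact Set.Icc_subset_Icc hT0 le_rfl)
  have hbound : ‖∫ s in T..t, φ s‖ ≤ ε / 2 * |t - T| := by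
    apply intervalIntegral.norm_integral_le_of_norm_le_const
    intro x hx
    rw [Set.uIoc_of_le htT] at hx
    exact (hT₀ x (le_trans (le_max_left _ _) hx.1.le)).le
  have hnorm : ‖(∫ s in (0:ℝ)..t, φ s)‖ ≤ C + ε / 2 * t := by
    rw [hsplit]
    refine le_trans (norm_add_le _ _) ?_
    have : |t - T| ≤ t := by rw [_root_.abs_of_nonneg (by linarith : (0:ℝ) ≤ t - T)]; linarith
    nlinarith
  have hnt : ‖(t : ℂ)‖ = t := by
    rw [Complex.norm_real, Real.norm_of_nonneg htpos.le]
  rw [norm_div, hnt]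
  have hCt : C / t < ε / 2 := by
    rw [div_lt_iff₀ htpos]
    rw [div_lt_iff₀ hε] at ht2
    nlinarith
  calc ‖(∫ s in (0:ℝ)..t, φ s)‖ / t ≤ (C + ε / 2 * t) / t := by gcongr
      _ = C / t + ε / 2 := by
        rw [add_div, mul_div_assoc, div_self htpos.ne', mul_one]
      _ < ε / 2 + ε / 2 := by linarith
      _ = ε := by ring

/-- If `s * φ s → 0` then `(∫₀ᵗ φ)/log(t+1) → 0`. -/
lemma logsmall (φ : ℝ → ℂ) (hi : ∀ t, 0 ≤ t → IntervalIntegrable φ volume 0 t)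
    (h : Tendsto (fun s : ℝ => (s : ℂ) * φ s) atTop (𝓝 0)) :
    Tendsto (fun t : ℝ => (∫ s in (0:ℝ)..t, φ s) / (Real.log (t + 1) : ℂ)) atTop (𝓝 0) := by
  rw [NormedAddCommGroup.tendsto_nhds_zero]
  intro ε hε
  have h2 : ∀ᶠ s : ℝ in atTop, ‖(s : ℂ) * φ s‖ < ε / 8 := by
    have := h.norm
    simp only [norm_zero] at this
    exact this.eventually_lt_const (by positivity)
  obtain ⟨T₀, hT₀⟩ := eventually_atTop.1 h2
  set T := max T₀ 1 with hTdef
  have hT1 : (1:ℝ) ≤ T := le_max_right _ _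
  have hT0 : (0:ℝ) ≤ T := by linarith
  -- pointwise bound for s ≥ T
  have hφb : ∀ s : ℝ, T ≤ s → ‖φ s‖ ≤ ε / 4 * (s + 1)⁻¹ := by
    intro s hs
    have hs1 : (1:ℝ) ≤ s := le_trans hT1 hs
    have hspos : (0:ℝ) < s := by linarith
    have := (hT₀ s (le_trans (le_max_left _ _) hs)).le
    rw [norm_mul, Complex.norm_real, Real.norm_of_nonneg hspos.le] at this
    have h1 : ‖φ s‖ ≤ ε / 8 / s := by
      rw [le_div_iff₀ hspos]; linarith [this]
    refine h1.trans ?_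
    calc ε / 8 / s ≤ ε / 4 / (s + 1) := by
          rw [div_le_div_iff₀ hspos (by linarith : (0:ℝ) < s + 1)]
          nlinarith [hε.le]
      _ = ε / 4 * (s + 1)⁻¹ := by rw [div_eq_mul_inv]
  set C := ‖∫ s in (0:ℝ)..T, φ s‖ with hCdef
  have hC0 : 0 ≤ C := norm_nonneg _
  -- log(t+1) → ∞
  have hlog : Tendsto (fun t : ℝ => Real.log (t + 1)) atTop atTop :=
    Real.tendsto_log_atTop.comp (tendsto_atTop_add_const_right _ 1 tendsto_id)
  filter_upwards [eventually_ge_atTop T, hlog.eventually_gt_atTop (max (2 * C / ε) 0)]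
    with t htT htlog
  have hlogpos : 0 < Real.log (t + 1) := lt_of_le_of_lt (le_max_right _ _) htlog
  have htpos : 0 < t := lt_of_lt_of_le (by linarith) htT
  have hsplit : (∫ s in (0:ℝ)..t, φ s) = (∫ s in (0:ℝ)..T, φ s) + ∫ s in T..t, φ s := by
    rw [intervalIntegral.integral_add_adjacent_intervals (hi T hT0)]
    exact (hi t htpos.le).mono_set (by
      rw [Set.uIcc_of_le htT, Set.uIcc_of_le htpos.le]
      exact Set.Icc_subset_Icc hT0 le_rfl)
  have hbound : ‖∫ s in T..t, φ s‖ ≤ ε / 4 * (Real.log (t + 1) - Real.log (T + 1)) := by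
    have hint : IntervalIntegrable (fun s : ℝ => ε / 4 * (s + 1)⁻¹) volume T t := by
      apply ContinuousOn.intervalIntegrable
      apply ContinuousOn.mul continuousOn_const
      apply ContinuousOn.inv₀ (by fun_prop)
      intro x hx
      rw [Set.uIcc_of_le htT] at hx
      nlinarith [hx.1]
    have := intervalIntegral.norm_integral_le_abs_of_norm_le (μ := volume) (f := φ)
      (g := fun s : ℝ => ε / 4 * (s + 1)⁻¹) (a := T) (b := t) ?_ hint
    · refine this.trans ?_
      rw [intervalIntegral.integral_const_mul, integral_inv_add_one hT0 htT]
      apply le_of_eq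
      apply _root_.abs_of_nonneg
      have hll : Real.log (T + 1) ≤ Real.log (t + 1) :=
        Real.log_le_log (by linarith) (by linarith)
      nlinarith
    · refine (MeasureTheory.ae_restrict_iff' measurableSet_uIoc).2 (ae_of_all _ ?_)
      intro x hx
      rw [Set.uIoc_of_le htT] at hx
      exact hφb x hx.1.le
  have hnorm : ‖(∫ s in (0:ℝ)..t, φ s)‖ ≤ C + ε / 4 * Real.log (t + 1) := by
    rw [hsplit]
    refine le_trans (norm_add_le _ _) ?_
    have hTl : 0 ≤ Real.log (T + 1) := Real.log_nonneg (by linarith)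
    nlinarith [hbound]
  have hnl : ‖((Real.log (t + 1) : ℝ) : ℂ)‖ = Real.log (t + 1) := by
    rw [Complex.norm_real, Real.norm_of_nonneg hlogpos.le]
  rw [norm_div, hnl]
  have hCt : C / Real.log (t + 1) < ε / 2 := by
    rw [div_lt_iff₀ hlogpos]
    have h2' : 2 * C / ε < Real.log (t + 1) := lt_of_le_of_lt (le_max_left _ _) htlog
    rw [div_lt_iff₀ hε] at h2'
    nlinarith
  calc ‖(∫ s in (0:ℝ)..t, φ s)‖ / Real.log (t + 1)
      ≤ (C + ε / 4 * Real.log (t + 1)) / Real.log (t + 1) := by gcongr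
    _ = C / Real.log (t + 1) + ε / 4 := by
        rw [add_div, mul_div_assoc, div_self hlogpos.ne', mul_one]
    _ < ε / 2 + ε / 4 := by linarith
    _ < ε := by linarith

theorem stmt7 (F : ℝ → ℂ → ℂ) (f : ℂ → ℂ) (b c : ℂ)
    (hsg : IsContinuousSemigroupOnDisk F f)
    (hdw : HasDWPointOne F)
    (hb : b ≠ 0)
    (hrep : Tendsto (fun z : ℂ => (f z - b * (z - 1) ^ 2 - c * (z - 1) ^ 3) / (z - 1) ^ 3)
      (𝓝[unitDisk] (1 : ℂ)) (𝓝 0)) :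
    ∀ z ∈ unitDisk,
      Tendsto (fun t : ℝ =>
          (1 / (1 - F t z) + b * (t : ℂ) + (c / b) * (Real.log (t + 1) : ℂ)) /
            (Real.log (t + 1) : ℂ)) atTop (𝓝 0) := by
  intro z hz
  set u : ℝ → ℂ := fun t => F t z with hu_def
  have hu : ∀ t : ℝ, 0 ≤ t → u t ∈ unitDisk := fun t ht => hsg.mapsTo t ht hz
  have hu1 : ∀ t : ℝ, 0 ≤ t → 1 - u t ≠ 0 := by
    intro t ht h
    have h2 := hu t ht
    rw [unitDisk, Set.mem_setOf_eq] at h2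
    have h3 : u t = 1 := by linear_combination -h
    rw [h3] at h2
    simp at h2
  have hlim : Tendsto u atTop (𝓝 1) := hdw z hz
  set w : ℝ → ℂ := fun t => (1 - u t)⁻¹ with hw_def
  set g : ℝ → ℂ := fun t => -(f (u t)) / (1 - u t) ^ 2 with hg_def
  -- derivative of w
  have hw' : ∀ t : ℝ, 0 ≤ t → HasDerivWithinAt w (g t) (Set.Ici 0) t := by
    intro t ht
    have h1 : HasDerivWithinAt (fun s => 1 - u s) (f (u t)) (Set.Ici 0) t := by
      have := (hsg.ode z hz t ht).const_sub 1
      simpa using this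
    have h2 := (hasDerivAt_inv (hu1 t ht)).comp_hasDerivWithinAt t h1
    have h3 : -((1 - u t) ^ 2)⁻¹ * f (u t) = g t := by
      rw [hg_def]
      field_simp
    exact h3 ▸ h2
  -- continuity of u, w, g on Ici 0
  have hucont : ContinuousOn u (Set.Ici 0) := fun t ht =>
    (hsg.ode z hz t ht).continuousWithinAt
  have hwcont : ContinuousOn w (Set.Ici 0) := fun t ht => (hw' t ht).continuousWithinAt
  have hgcont : ContinuousOn g (Set.Ici 0) := by
    apply ContinuousOn.div
    · exact ((hsg.gen_holomorphic.continuousOn.comp hucont hu).neg)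
    · exact ((continuousOn_const.sub hucont).pow 2)
    · intro t ht
      exact pow_ne_zero 2 (hu1 t ht)
  have hgint : ∀ t : ℝ, 0 ≤ t → IntervalIntegrable g volume 0 t := by
    intro t ht
    apply ContinuousOn.intervalIntegrable
    apply hgcont.mono
    rw [Set.uIcc_of_le ht]
    exact Set.Icc_subset_Ici_self
  -- FTC
  have hftc : ∀ t : ℝ, 0 ≤ t → (∫ s in (0:ℝ)..t, g s) = w t - w 0 := by
    intro t ht
    apply intervalIntegral.integral_eq_sub_of_hasDeriv_right_of_le ht
    · exact hwcont.mono (Set.Icc_subset_Ici_self)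
    · intro x hx
      exact (hw' x hx.1.le).mono (fun y hy => le_of_lt (lt_trans hx.1 hy))
    · exact hgint t ht
  -- the error term ε
  set e : ℝ → ℂ := fun s =>
    (f (u s) - b * (u s - 1) ^ 2 - c * (u s - 1) ^ 3) / (u s - 1) ^ 3 with he_def
  have hetend : Tendsto e atTop (𝓝 0) := by
    apply hrep.comp
    rw [tendsto_nhdsWithin_iff]
    exact ⟨hlim, eventually_atTop.2 ⟨0, fun t ht => hu t ht⟩⟩
  -- key algebraic identity
  have hkey : ∀ s : ℝ, 0 ≤ s → g s = -b + (c + e s) * (1 - u s) := by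
    intro s hs
    have h1 : 1 - u s ≠ 0 := hu1 s hs
    have h1' : u s - 1 ≠ 0 := fun h => h1 (by linear_combination -h)
    rw [hg_def, he_def]
    field_simp
    ring
  have h1u : Tendsto (fun s => 1 - u s) atTop (𝓝 0) := by
    have := (tendsto_const_nhds (x := (1:ℂ))).sub hlim
    simpa using this
  -- g → -b
  have hgtend : Tendsto g atTop (𝓝 (-b)) := by
    have h2 : Tendsto (fun s => -b + (c + e s) * (1 - u s)) atTop (𝓝 (-b + (c + 0) * 0)) := by
      exact tendsto_const_nhds.add ((tendsto_const_nhds.add hetend).mul h1u)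
    simp only [mul_zero, add_zero] at h2
    exact h2.congr' (by filter_upwards [eventually_ge_atTop (0:ℝ)] with s hs
                        exact (hkey s hs).symm)
  -- Cesàro: (∫₀ᵗ (g+b))/t → 0
  have hgb_int : ∀ t : ℝ, 0 ≤ t → IntervalIntegrable (fun s => g s + b) volume 0 t :=
    fun t ht => (hgint t ht).add intervalIntegrable_const
  have hces : Tendsto (fun t : ℝ => (∫ s in (0:ℝ)..t, (g s + b)) / (t : ℂ)) atTop (𝓝 0) := by
    apply cesaro _ hgb_int
    have := hgtend.add (tendsto_const_nhds (x := b))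
    simpa using this
  -- w t / t → -b
  have hinv_t : Tendsto (fun t : ℝ => ((t : ℂ))⁻¹) atTop (𝓝 0) := by
    have : Tendsto (fun t : ℝ => ((t⁻¹ : ℝ) : ℂ)) atTop (𝓝 ((0:ℝ):ℂ)) :=
      (Complex.continuous_ofReal.tendsto _).comp tendsto_inv_atTop_zero
    simpa using this.congr (fun t => by rw [Complex.ofReal_inv])
  have hwt : Tendsto (fun t : ℝ => w t / (t : ℂ)) atTop (𝓝 (-b)) := by
    have heq : ∀ᶠ t : ℝ in atTop, w t / (t : ℂ)
        = w 0 * ((t:ℂ))⁻¹ + (∫ s in (0:ℝ)..t, (g s + b)) / (t : ℂ) + -b := by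
      filter_upwards [eventually_ge_atTop (1:ℝ)] with t ht
      have ht0 : (0:ℝ) ≤ t := by linarith
      have htc : (t : ℂ) ≠ 0 := by
        simp only [ne_eq, Complex.ofReal_eq_zero]
        linarith
      have hsub : (∫ s in (0:ℝ)..t, (g s + b)) = (w t - w 0) + b * t := by
        rw [intervalIntegral.integral_add (hgint t ht0) intervalIntegrable_const,
            hftc t ht0, intervalIntegral.integral_const]
        simp [sub_zero]
        ring
      rw [hsub]
      field_simp
      ring
    rw [tendsto_congr' heq]
    have : Tendsto (fun t : ℝ => w 0 * ((t:ℂ))⁻¹ + (∫ s in (0:ℝ)..t, (g s + b)) / (t : ℂ) + -b)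
        atTop (𝓝 (w 0 * 0 + 0 + -b)) :=
      ((tendsto_const_nhds.mul hinv_t).add hces).add tendsto_const_nhds
    simpa using this
  -- t (1 - u t) → -b⁻¹
  have ht1u : Tendsto (fun t : ℝ => (t : ℂ) * (1 - u t)) atTop (𝓝 ((-b)⁻¹)) := by
    have := hwt.inv₀ (neg_ne_zero.2 hb)
    refine this.congr' ?_
    filter_upwards [eventually_ge_atTop (0:ℝ)] with t ht
    rw [inv_div]
    rw [div_eq_mul_inv, hw_def]
    simp only [inv_inv]
  -- the full error function
  set φ : ℝ → ℂ := fun s => g s + b + (c / b) * (((s + 1)⁻¹ : ℝ) : ℂ) with hφ_def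
  have hφint : ∀ t : ℝ, 0 ≤ t → IntervalIntegrable φ volume 0 t := by
    intro t ht
    apply (hgb_int t ht).add
    apply ContinuousOn.intervalIntegrable
    apply ContinuousOn.mul continuousOn_const
    apply Complex.continuous_ofReal.comp_continuousOn
    apply ContinuousOn.inv₀ (by fun_prop)
    intro x hx
    rw [Set.uIcc_of_le ht] at hx
    nlinarith [hx.1]
  -- s φ(s) → 0
  have hφsmall : Tendsto (fun s : ℝ => (s : ℂ) * φ s) atTop (𝓝 0) := by
    have h1 : Tendsto (fun s : ℝ => (s:ℂ) * (g s + b)) atTop (𝓝 (c * (-b)⁻¹)) := by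
      have heq : ∀ᶠ s : ℝ in atTop, (s:ℂ) * (g s + b) = (c + e s) * ((s:ℂ) * (1 - u s)) := by
        filter_upwards [eventually_ge_atTop (0:ℝ)] with s hs
        rw [hkey s hs]; ring
      rw [tendsto_congr' heq]
      have h7 := ((tendsto_const_nhds (x := c)).add hetend).mul ht1u
      simpa using h7
    have h2 : Tendsto (fun s : ℝ => (s:ℂ) * ((c / b) * (((s + 1)⁻¹ : ℝ) : ℂ)))
        atTop (𝓝 (c / b)) := by
      have hre : Tendsto (fun s : ℝ => s * (s + 1)⁻¹) atTop (𝓝 1) := by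
        have heq : ∀ᶠ s : ℝ in atTop, s * (s + 1)⁻¹ = 1 - (s+1)⁻¹ := by
          filter_upwards [eventually_gt_atTop (0:ℝ)] with s hs
          have : s + 1 ≠ 0 := by linarith
          field_simp
          ring
        rw [tendsto_congr' heq]
        have : Tendsto (fun s : ℝ => 1 - (s+1)⁻¹) atTop (𝓝 (1 - 0)) :=
          tendsto_const_nhds.sub (tendsto_inv_atTop_zero.comp
            (tendsto_atTop_add_const_right _ 1 tendsto_id))
        simpa using this
      have : Tendsto (fun s : ℝ => ((s * (s+1)⁻¹ : ℝ) : ℂ)) atTop (𝓝 ((1:ℝ):ℂ)) :=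
        (Complex.continuous_ofReal.tendsto _).comp hre
      have h3 : Tendsto (fun s : ℝ => (c / b) * ((s * (s+1)⁻¹ : ℝ) : ℂ)) atTop
          (𝓝 ((c/b) * ((1:ℝ):ℂ))) := tendsto_const_nhds.mul this
      simp only [Complex.ofReal_one, mul_one] at h3
      refine h3.congr (fun s => ?_)
      push_cast
      ring
    have := h1.add h2
    have heval : c * (-b)⁻¹ + c / b = 0 := by
      rw [inv_neg, mul_neg, div_eq_mul_inv, neg_add_cancel]
    rw [heval] at this
    refine this.congr (fun s => ?_)
    rw [hφ_def]
    ring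
  -- conclusion
  have hmain := logsmall φ hφint hφsmall
  have hlog0 : Tendsto (fun t : ℝ => ((Real.log (t + 1) : ℝ) : ℂ)⁻¹) atTop (𝓝 0) := by
    have hlog : Tendsto (fun t : ℝ => Real.log (t + 1)) atTop atTop :=
      Real.tendsto_log_atTop.comp (tendsto_atTop_add_const_right _ 1 tendsto_id)
    have h4 : Tendsto (fun t : ℝ => (((Real.log (t+1))⁻¹ : ℝ) : ℂ)) atTop (𝓝 ((0:ℝ):ℂ)) :=
      (Complex.continuous_ofReal.tendsto _).comp (tendsto_inv_atTop_zero.comp hlog)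
    simp only [Complex.ofReal_zero] at h4
    exact h4.congr (fun t => by rw [Complex.ofReal_inv])
  have hfinal := hmain.add ((tendsto_const_nhds (x := w 0)).mul hlog0)
  simp only [add_zero, mul_zero] at hfinal
  refine hfinal.congr' ?_
  filter_upwards [eventually_ge_atTop (0:ℝ)] with t ht
  have hsum : (∫ s in (0:ℝ)..t, φ s)
      = (w t - w 0) + b * t + (c / b) * ((Real.log (t+1) : ℝ) : ℂ) := by
    rw [hφ_def]
    rw [intervalIntegral.integral_add (hgb_int t ht) ?_,
        intervalIntegral.integral_add (hgint t ht) intervalIntegrable_const,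
        hftc t ht, intervalIntegral.integral_const]
    · rw [intervalIntegral.integral_const_mul]
      have h5 : (∫ s in (0:ℝ)..t, (((s + 1)⁻¹ : ℝ) : ℂ)) = ((Real.log (t+1) : ℝ) : ℂ) := by
        rw [intervalIntegral.integral_ofReal, integral_inv_add_one le_rfl ht]
        simp
      rw [h5]
      simp only [sub_zero, Complex.real_smul]
      ring
    · apply ContinuousOn.intervalIntegrable
      apply ContinuousOn.mul continuousOn_const
      apply Complex.continuous_ofReal.comp_continuousOn
      apply ContinuousOn.inv₀ (by fun_prop)
      intro x hx
      rw [Set.uIcc_of_le ht] at hx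
      nlinarith [hx.1]
  have hwt1 : 1 / (1 - F t z) = w t := by rw [hw_def, one_div]
  rw [hwt1]
  have h6 : w t + b * t + (c / b) * ((Real.log (t+1) : ℝ) : ℂ)
      = (∫ s in (0:ℝ)..t, φ s) + w 0 := by rw [hsum]; ring
  rw [h6]
  ring
end
end

section
/- Let (F_t)_{t≥0} be a continuous one-parameter semigroup on Δ with Denjoy–Wolff point τ = 1 whose generator f has no zeros in Δ and admits the representation f(z) = b(z−1)² + c(z−1)³ + R₁(z), where b, c ∈ ℂ, b ≠ 0, and lim_{z→1, z∈Δ} R₁(z)/(z−1)^{3+ε} = 0 for some ε > 0. Let h be the Koenigs function of f. Then there exists a constant A ∈ ℂ, independent of z, such that for every z ∈ Δ, lim_{t→∞} ( 1/(1 − F_t(z)) + bt + (c/b)·log(t+1) + b·h(z) ) = A. -/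
open Complex Filter Topology Set MeasureTheory

noncomputable section

lemma disk_ne_one {w : ℂ} (hw : w ∈ unitDisk) : (1 : ℂ) - w ≠ 0 := by
  intro h
  have : w = 1 := by linear_combination -h
  simp [unitDisk, this] at hw

lemma disk_re_pos {w : ℂ} (hw : w ∈ unitDisk) : 0 < ((1 : ℂ) - w).re := by
  have h1 : w.re ≤ ‖w‖ := Complex.re_le_norm w
  have : ‖w‖ < 1 := hw
  simp only [Complex.sub_re, Complex.one_re]
  linarith

lemma disk_slit {w : ℂ} (hw : w ∈ unitDisk) : (1 : ℂ) - w ∈ Complex.slitPlane :=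
  Complex.mem_slitPlane_iff.mpr (Or.inl (disk_re_pos hw))

lemma rpow_tendsto_zero {p : ℝ} (hp : 0 < p) :
    Tendsto (fun d : ℝ => d ^ p) (𝓝[>] (0:ℝ)) (𝓝 0) := by
  have h := (Real.continuousAt_rpow_const 0 p (Or.inr hp.le)).tendsto
  rw [Real.zero_rpow hp.ne'] at h
  exact h.mono_left nhdsWithin_le_nhds

lemma zlogz_tendsto {u : ℝ → ℂ} (hne : ∀ᶠ t in atTop, u t ≠ 0)
    (hu : Tendsto u atTop (𝓝 0)) :
    Tendsto (fun t => u t * Complex.log (u t)) atTop (𝓝 0) := by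
  have key : Tendsto (fun x : ℝ => |Real.log x * x ^ (1:ℝ)| + Real.pi * x) (𝓝[>] (0:ℝ)) (𝓝 0) := by
    have h1 := (tendsto_log_mul_rpow_nhdsGT_zero one_pos).abs
    have h2 : Tendsto (fun x : ℝ => Real.pi * x) (𝓝[>] (0:ℝ)) (𝓝 0) := by
      have h3 : Tendsto (fun x : ℝ => Real.pi * x) (𝓝 (0:ℝ)) (𝓝 (Real.pi * 0)) :=
        (continuous_const.mul continuous_id).tendsto (0:ℝ)
      simpa using h3.mono_left nhdsWithin_le_nhds
    simpa using h1.add h2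
  have habs : Tendsto (fun t => ‖(u t)‖) atTop (𝓝[>] (0:ℝ)) := by
    rw [tendsto_nhdsWithin_iff]
    constructor
    · simpa [Function.comp_def] using (continuous_norm.tendsto 0).comp hu
    · exact hne.mono fun t ht => by simpa [Set.mem_Ioi] using (norm_pos_iff.mpr ht)
  refine squeeze_zero_norm' ?_ (key.comp habs)
  filter_upwards [hne] with t ht
  have hlog : ‖(Complex.log (u t))‖ ≤ |Real.log (‖(u t)‖)| + Real.pi := by
    calc ‖(Complex.log (u t))‖ ≤ |(Complex.log (u t)).re| + |(Complex.log (u t)).im| :=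
          Complex.norm_le_abs_re_add_abs_im _
      _ ≤ |Real.log (‖(u t)‖)| + Real.pi := by
          rw [Complex.log_re, Complex.log_im]
          have := Complex.abs_arg_le_pi (u t)
          have h2 : |Complex.arg (u t)| ≤ Real.pi := Complex.abs_arg_le_pi (u t)
          gcongr
  have h0 : (0:ℝ) ≤ ‖(u t)‖ := norm_nonneg _
  calc ‖u t * Complex.log (u t)‖ = ‖(u t)‖ * ‖(Complex.log (u t))‖ := by
        rw [norm_mul]
    _ ≤ ‖(u t)‖ * (|Real.log (‖(u t)‖)| + Real.pi) := by
        gcongr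
    _ = |Real.log (‖(u t)‖) * (‖(u t)‖) ^ (1:ℝ)| + Real.pi * ‖(u t)‖ := by
        rw [Real.rpow_one, abs_mul, _root_.abs_of_nonneg h0]; ring

-- derivative of H
lemma Hderiv {f h : ℂ → ℂ} {b c : ℂ} (hb : b ≠ 0)
    (hK : ∀ z ∈ unitDisk, HasDerivAt h (-(1 / f z)) z)
    {w : ℂ} (hw : w ∈ unitDisk) :
    HasDerivAt (fun ζ => h ζ + 1 / (b * (1 - ζ)) - c / b ^ 2 * Complex.log (1 - ζ))
      (-(1 / f w) + b / (b * (1 - w)) ^ 2 + c / b ^ 2 * (1 - w)⁻¹) w := by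
  have hne := disk_ne_one hw
  have hinner : HasDerivAt (fun ζ : ℂ => 1 - ζ) (-1) w := by
    simpa using (hasDerivAt_id w).const_sub 1
  have hg : HasDerivAt (fun ζ : ℂ => b * (1 - ζ)) (-b) w := by
    simpa using hinner.const_mul b
  have h1 : HasDerivAt (fun ζ : ℂ => 1 / (b * (1 - ζ))) (b / (b * (1 - w)) ^ 2) w := by
    have := (hasDerivAt_const w (1:ℂ)).div hg (mul_ne_zero hb hne)
    refine this.congr_deriv ?_
    field_simp
    ring
  have h2 : HasDerivAt (fun ζ : ℂ => Complex.log (1 - ζ)) (-(1 - w)⁻¹) w := by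
    have hl : HasDerivAt Complex.log (1 - w)⁻¹ (1 - w) := Complex.hasDerivAt_log (disk_slit hw)
    have := hl.comp w hinner
    refine this.congr_deriv ?_
    ring
  have := ((hK w hw).add h1).sub (h2.const_mul (c / b ^ 2))
  refine this.congr_deriv ?_
  ring

lemma Gbound_pt {fv b c u : ℂ} {ε : ℝ} (hb : b ≠ 0) (hε : 0 < ε)
    (hu : u ≠ 0) (hfv : fv ≠ 0)
    (hr1 : ‖u‖ < 1)
    (hrb : ‖u‖ < ‖b‖ / (2 * (‖c‖ + 1)))
    (hδw : ‖(fv - b * u ^ 2 + c * u ^ 3)‖ ≤ ‖u‖ ^ (3 + ε)) :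
    ‖(-(1 / fv) + b / (b * u) ^ 2 + c / b ^ 2 * u⁻¹)‖ ≤
      (2 * (‖c‖ ^ 2 + ‖b‖ + ‖c‖) / ‖b‖ ^ 3) *
        ‖u‖ ^ (min ε 1 - 1) := by
  have hbpos : 0 < ‖b‖ := norm_pos_iff.mpr hb
  obtain ⟨r, hr⟩ : ∃ r : ℝ, r = ‖u‖ := ⟨_, rfl⟩
  obtain ⟨Bb, hBb⟩ : ∃ x : ℝ, x = ‖b‖ := ⟨_, rfl⟩
  obtain ⟨Cc, hCc⟩ : ∃ x : ℝ, x = ‖c‖ := ⟨_, rfl⟩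
  obtain ⟨Ff, hFf⟩ : ∃ x : ℝ, x = ‖fv‖ := ⟨_, rfl⟩
  obtain ⟨Dd, hDd⟩ : ∃ x : ℝ, x = ‖(fv - b * u ^ 2 + c * u ^ 3)‖ := ⟨_, rfl⟩
  have hr0 : 0 < r := hr ▸ norm_pos_iff.mpr hu
  have hB0 : 0 < Bb := hBb ▸ hbpos
  have hC0 : 0 ≤ Cc := hCc ▸ norm_nonneg c
  have hF0 : 0 ≤ Ff := hFf ▸ norm_nonneg fv
  have hD0 : 0 ≤ Dd := hDd ▸ norm_nonneg _
  rw [← hr] at hr1 hrb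
  rw [← hBb, ← hCc] at hrb
  rw [← hr, ← hBb, ← hCc]
  have hδw' : Dd ≤ r ^ (3 + ε) := by rw [hDd, hr]; exact hδw
  -- r^(3+ε) ≤ r^3
  have hr3 : r ^ (3 + ε) ≤ r ^ (3 : ℕ) := by
    have h := Real.rpow_le_rpow_of_exponent_ge hr0 hr1.le
      (show ((3:ℕ):ℝ) ≤ 3 + ε by push_cast; linarith)
    rwa [Real.rpow_natCast] at h
  have hrb' : r * (2 * (Cc + 1)) < Bb := by
    rw [lt_div_iff₀ (by positivity)] at hrb
    linarith
  -- lower bound for |fv|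
  have hfl : Bb * r ^ 2 / 2 ≤ Ff := by
    have hfeq : b * u ^ 2 = fv + c * u ^ 3 - (fv - b * u ^ 2 + c * u ^ 3) := by ring
    have h1 : ‖(b * u ^ 2)‖ ≤ Ff + ‖(c * u ^ 3)‖ + Dd := by
      rw [hfeq, hFf, hDd]
      calc ‖(fv + c * u ^ 3 - (fv - b * u ^ 2 + c * u ^ 3))‖
          ≤ ‖(fv + c * u ^ 3)‖ + ‖(fv - b * u ^ 2 + c * u ^ 3)‖ :=
            norm_sub_le _ _
        _ ≤ ‖fv‖ + ‖(c * u ^ 3)‖ +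
              ‖(fv - b * u ^ 2 + c * u ^ 3)‖ := by
            have := norm_add_le fv (c * u ^ 3)
            linarith
    have h2 : ‖(b * u ^ 2)‖ = Bb * r ^ 2 := by
      rw [norm_mul, norm_pow, hBb, hr]
    have h3 : ‖(c * u ^ 3)‖ = Cc * r ^ 3 := by
      rw [norm_mul, norm_pow, hCc, hr]
    rw [h2, h3] at h1
    have h4 : (Cc + 1) * r ^ 3 ≤ Bb * r ^ 2 / 2 := by nlinarith [sq_nonneg r]
    nlinarith [hδw', hr3]
  have hFpos : 0 < Ff := lt_of_lt_of_le (by positivity) hfl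
  -- identity
  have hiden : -(1 / fv) + b / (b * u) ^ 2 + c / b ^ 2 * u⁻¹ =
      (-(c ^ 2 * u ^ 4) + (b + c * u) * (fv - b * u ^ 2 + c * u ^ 3)) /
        (b ^ 2 * u ^ 2 * fv) := by
    field_simp
    ring
  rw [hiden, norm_div]
  have hden : ‖(b ^ 2 * u ^ 2 * fv)‖ = Bb ^ 2 * r ^ 2 * Ff := by
    rw [norm_mul, norm_mul, norm_pow, norm_pow, hBb, hr, hFf]
  rw [hden]
  have hdenpos : 0 < Bb ^ 2 * r ^ 2 * Ff := by positivity
  -- exponent facts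
  have he'pos : 0 < min ε 1 := lt_min hε one_pos
  have hone_le : (1:ℝ) ≤ r ^ (min ε 1 - 1) := by
    have h := Real.rpow_le_rpow_of_exponent_ge hr0 hr1.le
      (show min ε 1 - 1 ≤ (0:ℝ) by have := min_le_right ε 1; linarith)
    simpa using h
  have hee' : r ^ (ε - 1) ≤ r ^ (min ε 1 - 1) :=
    Real.rpow_le_rpow_of_exponent_ge hr0 hr1.le
      (by have := min_le_left ε 1; linarith)
  have hsplit : r ^ (3 + ε) = r ^ (ε - 1) * r ^ (4:ℕ) := by
    rw [← Real.rpow_natCast r 4, ← Real.rpow_add hr0]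
    congr 1
    push_cast
    ring
  have hre1 : 0 < r ^ (min ε 1 - 1) := Real.rpow_pos_of_pos hr0 _
  -- numerator bound
  have hnum : ‖(-(c ^ 2 * u ^ 4) + (b + c * u) * (fv - b * u ^ 2 + c * u ^ 3))‖ ≤
      (Cc ^ 2 + Bb + Cc) * r ^ (min ε 1 - 1) * r ^ (4:ℕ) := by
    have h1 : ‖(-(c ^ 2 * u ^ 4) + (b + c * u) * (fv - b * u ^ 2 + c * u ^ 3))‖ ≤
        Cc ^ 2 * r ^ (4:ℕ) + (Bb + Cc * r) * Dd := by
      calc ‖(-(c ^ 2 * u ^ 4) + (b + c * u) * (fv - b * u ^ 2 + c * u ^ 3))‖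
          ≤ ‖(-(c ^ 2 * u ^ 4))‖ +
              ‖((b + c * u) * (fv - b * u ^ 2 + c * u ^ 3))‖ :=
            norm_add_le _ _
        _ ≤ Cc ^ 2 * r ^ (4:ℕ) + (Bb + Cc * r) * Dd := by
            have e1 : ‖(-(c ^ 2 * u ^ 4))‖ = Cc ^ 2 * r ^ (4:ℕ) := by
              rw [norm_neg, norm_mul, norm_pow, norm_pow, hCc, hr]
            have e2 : ‖((b + c * u) * (fv - b * u ^ 2 + c * u ^ 3))‖ ≤
                (Bb + Cc * r) * Dd := by
              rw [norm_mul, ← hDd]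
              have e3 : ‖(b + c * u)‖ ≤ Bb + Cc * r := by
                calc ‖(b + c * u)‖ ≤ ‖b‖ + ‖(c * u)‖ :=
                      norm_add_le _ _
                  _ = Bb + Cc * r := by rw [norm_mul, hBb, hCc, hr]
              exact mul_le_mul_of_nonneg_right e3 hD0
            linarith
    have h2 : (Bb + Cc * r) * Dd ≤ (Bb + Cc) * (r ^ (ε - 1) * r ^ (4:ℕ)) := by
      have e1 : Bb + Cc * r ≤ Bb + Cc := by nlinarith
      have e2 : Dd ≤ r ^ (ε - 1) * r ^ (4:ℕ) := by rw [← hsplit]; exact hδw'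
      have e4 : (0:ℝ) ≤ Bb + Cc := by linarith
      exact mul_le_mul e1 e2 hD0 e4
    have h3 : (Bb + Cc) * (r ^ (ε - 1) * r ^ (4:ℕ)) ≤
        (Bb + Cc) * r ^ (min ε 1 - 1) * r ^ (4:ℕ) := by
      have h0 : (0:ℝ) ≤ Bb + Cc := by linarith
      have h4 : (0:ℝ) ≤ r ^ (4:ℕ) := by positivity
      calc (Bb + Cc) * (r ^ (ε - 1) * r ^ (4:ℕ)) = ((Bb + Cc) * r ^ (ε - 1)) * r ^ (4:ℕ) := by ring
        _ ≤ ((Bb + Cc) * r ^ (ε ⊓ 1 - 1)) * r ^ (4:ℕ) := by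
            have := mul_le_mul_of_nonneg_left hee' h0
            exact mul_le_mul_of_nonneg_right this h4
    have h5 : Cc ^ 2 * r ^ (4:ℕ) ≤ Cc ^ 2 * r ^ (min ε 1 - 1) * r ^ (4:ℕ) := by
      have h4 : (0:ℝ) ≤ r ^ (4:ℕ) := by positivity
      have h6 : Cc ^ 2 * 1 ≤ Cc ^ 2 * r ^ (min ε 1 - 1) :=
        mul_le_mul_of_nonneg_left hone_le (sq_nonneg Cc)
      calc Cc ^ 2 * r ^ (4:ℕ) = (Cc ^ 2 * 1) * r ^ (4:ℕ) := by ring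
        _ ≤ (Cc ^ 2 * r ^ (min ε 1 - 1)) * r ^ (4:ℕ) := mul_le_mul_of_nonneg_right h6 h4
    calc ‖(-(c ^ 2 * u ^ 4) + (b + c * u) * (fv - b * u ^ 2 + c * u ^ 3))‖
        ≤ Cc ^ 2 * r ^ (4:ℕ) + (Bb + Cc * r) * Dd := h1
      _ ≤ Cc ^ 2 * r ^ (min ε 1 - 1) * r ^ (4:ℕ) + (Bb + Cc) * r ^ (min ε 1 - 1) * r ^ (4:ℕ) := by
          have := h2.trans h3
          linarith
      _ = (Cc ^ 2 + Bb + Cc) * r ^ (min ε 1 - 1) * r ^ (4:ℕ) := by ring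
  rw [div_le_iff₀ hdenpos]
  have hkey : (2 * (Cc ^ 2 + Bb + Cc) / Bb ^ 3) * (Bb ^ 3 / 2) = Cc ^ 2 + Bb + Cc := by
    field_simp
  calc ‖(-(c ^ 2 * u ^ 4) + (b + c * u) * (fv - b * u ^ 2 + c * u ^ 3))‖
      ≤ (Cc ^ 2 + Bb + Cc) * r ^ (min ε 1 - 1) * r ^ (4:ℕ) := hnum
    _ = (2 * (Cc ^ 2 + Bb + Cc) / Bb ^ 3 * r ^ (min ε 1 - 1)) * (Bb ^ 3 * r ^ (4:ℕ) / 2) := by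
        field_simp
    _ ≤ (2 * (Cc ^ 2 + Bb + Cc) / Bb ^ 3 * r ^ (min ε 1 - 1)) * (Bb ^ 2 * r ^ 2 * Ff) := by
        have hM0 : 0 ≤ 2 * (Cc ^ 2 + Bb + Cc) / Bb ^ 3 * r ^ (min ε 1 - 1) := by positivity
        have : Bb ^ 3 * r ^ (4:ℕ) / 2 ≤ Bb ^ 2 * r ^ 2 * Ff := by
          have h7 := mul_le_mul_of_nonneg_left hfl (by positivity : (0:ℝ) ≤ Bb ^ 2 * r ^ 2)
          calc Bb ^ 3 * r ^ (4:ℕ) / 2 = Bb ^ 2 * r ^ 2 * (Bb * r ^ 2 / 2) := by ring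
            _ ≤ Bb ^ 2 * r ^ 2 * Ff := h7
        exact mul_le_mul_of_nonneg_left this hM0

lemma H_limit {H G : ℂ → ℂ} {ρ₀ M e' : ℝ}
    (hρ₀ : 0 < ρ₀) (hρ₀1 : ρ₀ ≤ 1) (he' : 0 < e') (he'1 : e' ≤ 1) (hM : 0 ≤ M)
    (hHd : ∀ w ∈ unitDisk, HasDerivAt H (G w) w)
    (hGb : ∀ w ∈ unitDisk, ‖(1 - w)‖ < ρ₀ →
      ‖(G w)‖ ≤ M * ‖(1 - w)‖ ^ (e' - 1)) :
    ∃ C : ℂ, Tendsto H (𝓝[unitDisk] (1 : ℂ)) (𝓝 C) := by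
  -- basic facts about real points 1 - s
  have hmem : ∀ s : ℝ, 0 < s → s < ρ₀ → ((1 : ℂ) - (s : ℂ)) ∈ unitDisk := by
    intro s hs0 hsρ
    have : ‖(1 - (s:ℂ))‖ = |1 - s| := by
      rw [show (1:ℂ) - (s:ℂ) = ((1 - s : ℝ) : ℂ) by push_cast; ring, Complex.norm_real, Real.norm_eq_abs]
    simp only [unitDisk, Set.mem_setOf_eq, this]
    rw [_root_.abs_of_nonneg (by linarith : (0:ℝ) ≤ 1 - s)]
    linarith
  have habs1 : ∀ s : ℝ, 0 ≤ s → ‖(1 - ((1:ℂ) - (s:ℂ)))‖ = s := by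
    intro s hs
    rw [show (1:ℂ) - ((1:ℂ) - (s:ℂ)) = ((s:ℝ):ℂ) by push_cast; ring, Complex.norm_real, Real.norm_eq_abs,
      _root_.abs_of_nonneg hs]
  set φ : ℝ → ℂ := fun s => H (1 - (s : ℂ)) with hφ
  have hφd : ∀ s : ℝ, 0 < s → s < ρ₀ → HasDerivAt φ (-(G (1 - (s:ℂ)))) s := by
    intro s hs0 hsρ
    have hKd : HasDerivAt (fun ζ : ℂ => H (1 - ζ)) (-(G (1 - (s:ℂ)))) (s : ℂ) := by
      have hinner : HasDerivAt (fun ζ : ℂ => 1 - ζ) (-1) (s:ℂ) := by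
        simpa using (hasDerivAt_id (s:ℂ)).const_sub 1
      have houter : HasDerivAt H (G (1 - (s:ℂ))) ((1:ℂ) - (s:ℂ)) :=
        hHd _ (hmem s hs0 hsρ)
      have := houter.comp (s:ℂ) hinner
      refine this.congr_deriv ?_
      ring
    exact hKd.comp_ofReal
  have hbound : ∀ s : ℝ, 0 < s → s < ρ₀ →
      ‖(G (1 - (s:ℂ)))‖ ≤ M * s ^ (e' - 1) := by
    intro s hs0 hsρ
    have h := hGb _ (hmem s hs0 hsρ) (by rw [habs1 s hs0.le]; exact hsρ)
    rwa [habs1 s hs0.le] at h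
  -- uniform increment estimate
  have claim1 : ∀ a t : ℝ, 0 < a → a ≤ t → t < ρ₀ →
      ‖φ t - φ a‖ ≤ M / e' * t ^ e' - M / e' * a ^ e' := by
    intro a t ha0 hat htρ
    have key := image_norm_le_of_norm_deriv_right_le_deriv_boundary'
      (f := fun x => φ x - φ a) (f' := fun x => -(G (1 - (x:ℂ))))
      (a := a) (b := t)
      (B := fun x => M / e' * x ^ e' - M / e' * a ^ e') (B' := fun x => M * x ^ (e' - 1))
      ?_ ?_ ?_ ?_ ?_ ?_
    · exact key ⟨hat, le_rfl⟩
    · -- continuity of φ - const on Icc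
      intro x hx
      have hx0 : 0 < x := lt_of_lt_of_le ha0 hx.1
      have hxρ : x < ρ₀ := lt_of_le_of_lt hx.2 htρ
      exact (((hφd x hx0 hxρ).continuousAt).sub continuousAt_const).continuousWithinAt
    · intro x hx
      have hx0 : 0 < x := lt_of_lt_of_le ha0 hx.1
      have hxρ : x < ρ₀ := lt_of_lt_of_le hx.2 htρ.le
      have hxρ' : x < ρ₀ := lt_of_le_of_lt hx.2.le htρ
      exact ((hφd x hx0 hxρ').sub_const (φ a)).hasDerivWithinAt
    · simp
    · -- continuity of B
      intro x hx
      have hx0 : 0 < x := lt_of_lt_of_le ha0 hx.1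
      have : HasDerivAt (fun x : ℝ => M / e' * x ^ e' - M / e' * a ^ e')
          (M / e' * (e' * x ^ (e' - 1))) x :=
        ((Real.hasDerivAt_rpow_const (Or.inl hx0.ne')).const_mul (M / e')).sub_const _
      exact this.continuousAt.continuousWithinAt
    · intro x hx
      have hx0 : 0 < x := lt_of_lt_of_le ha0 hx.1
      have hd : HasDerivAt (fun x : ℝ => M / e' * x ^ e' - M / e' * a ^ e')
          (M / e' * (e' * x ^ (e' - 1))) x :=
        ((Real.hasDerivAt_rpow_const (Or.inl hx0.ne')).const_mul (M / e')).sub_const _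
      have heq : M / e' * (e' * x ^ (e' - 1)) = M * x ^ (e' - 1) := by
        field_simp
      rw [heq] at hd
      exact hd.hasDerivWithinAt
    · intro x hx
      have hx0 : 0 < x := lt_of_lt_of_le ha0 hx.1
      have hxρ : x < ρ₀ := lt_of_lt_of_le hx.2 htρ.le
      rw [norm_neg]
      exact hbound x hx0 hxρ
  -- Cauchy ⇒ limit of φ at 0+
  obtain ⟨C, hC⟩ : ∃ C : ℂ, Tendsto φ (𝓝[>] (0:ℝ)) (𝓝 C) := by
    have hca : Cauchy (Filter.map φ (𝓝[>] (0:ℝ))) := by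
      rw [Metric.cauchy_iff]
      refine ⟨Filter.map_neBot, ?_⟩
      intro β hβ
      have h0 : Tendsto (fun d : ℝ => M / e' * d ^ e') (𝓝[>] (0:ℝ)) (𝓝 0) := by
        have := (rpow_tendsto_zero he').const_mul (M / e')
        simpa using this
      have h1 : ∀ᶠ d in 𝓝[>] (0:ℝ), M / e' * d ^ e' < β / 2 :=
        h0.eventually (eventually_lt_nhds (by linarith))
      have h2 : Ioo (0:ℝ) ρ₀ ∈ 𝓝[>] (0:ℝ) := Ioo_mem_nhdsGT_of_mem ⟨le_rfl, hρ₀⟩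
      obtain ⟨d, hd1, hd2⟩ := (h1.and (eventually_of_mem h2 (fun x hx => hx))).exists
      refine ⟨φ '' Ioo 0 d, image_mem_map (Ioo_mem_nhdsGT_of_mem ⟨le_rfl, hd2.1⟩), ?_⟩
      rintro x ⟨s, hs, rfl⟩ y ⟨s', hs', rfl⟩
      have hkey : ∀ p q : ℝ, p ∈ Ioo (0:ℝ) d → q ∈ Ioo (0:ℝ) d → p ≤ q →
          dist (φ p) (φ q) < β := by
        intro p q hp hq hpq
        have hqρ : q < ρ₀ := lt_trans hq.2 hd2.2
        have hqd : q ^ e' ≤ d ^ e' := Real.rpow_le_rpow (le_trans hp.1.le hpq) hq.2.le he'.le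
        have hp0 : 0 ≤ M / e' * p ^ e' :=
          mul_nonneg (div_nonneg hM he'.le) (Real.rpow_nonneg hp.1.le _)
        have hMe : 0 ≤ M / e' := div_nonneg hM he'.le
        have := mul_le_mul_of_nonneg_left hqd hMe
        calc dist (φ p) (φ q) = ‖φ q - φ p‖ := dist_eq_norm' _ _
          _ ≤ M / e' * q ^ e' - M / e' * p ^ e' := claim1 p q hp.1 hpq hqρ
          _ ≤ M / e' * d ^ e' := by linarith
          _ < β := by linarith [hd1]
      rcases le_total s s' with hss | hss
      · exact hkey s s' hs hs' hss
      · rw [dist_comm]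
        exact hkey s' s hs' hs hss
    obtain ⟨C, hC⟩ := CompleteSpace.complete hca
    exact ⟨C, hC⟩
  -- chord estimate
  have claim3 : ∀ w ∈ unitDisk, ‖(1 - w)‖ < ρ₀ →
      ‖H w - φ (‖(1 - w)‖)‖ ≤ 8 * M * ‖(1 - w)‖ ^ e' := by
    intro w hw hwρ
    set r : ℝ := ‖(1 - w)‖ with hrdef
    have hr0 : 0 < r := norm_pos_iff.mpr (disk_ne_one hw)
    have hr1 : r < 1 := lt_of_lt_of_le hwρ hρ₀1
    set x : ℂ := 1 - (r : ℂ) with hxdef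
    have hx : x ∈ unitDisk := hmem r hr0 hwρ
    have hball : unitDisk = Metric.ball (0:ℂ) 1 := by
      ext z; simp [unitDisk, Metric.mem_ball, Complex.dist_eq]
    have hconv : Convex ℝ unitDisk := by rw [hball]; exact convex_ball 0 1
    have hsub : segment ℝ w x ⊆ unitDisk := hconv.segment_subset hw hx
    -- bounds on |1 - ζ| for ζ on the segment
    have hseg : ∀ ζ ∈ segment ℝ w x, r / 2 ≤ ‖(1 - ζ)‖ ∧ ‖(1 - ζ)‖ ≤ r := by
      rintro ζ ⟨a, b', ha, hb', hab, rfl⟩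
      have hab' : (a:ℂ) + (b':ℂ) = 1 := by
        have : ((a + b' : ℝ) : ℂ) = ((1:ℝ):ℂ) := by rw [hab]
        push_cast at this
        exact this
      have hζ : (1:ℂ) - (a • w + b' • x) = (a:ℂ) * (1 - w) + (b':ℂ) * (r:ℂ) := by
        simp only [Complex.real_smul, hxdef]
        linear_combination -hab'
      constructor
      · -- lower bound via normSq
        have hnsq : (r/2)^2 ≤ Complex.normSq (1 - (a • w + b' • x)) := by
          rw [hζ, Complex.normSq_add]
          have e1 : Complex.normSq ((a:ℂ) * (1 - w)) = a^2 * r^2 := by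
            rw [Complex.normSq_mul, Complex.normSq_ofReal, ← Complex.sq_norm, ← hrdef]; ring
          have e2 : Complex.normSq ((b':ℂ) * (r:ℂ)) = b'^2 * r^2 := by
            rw [Complex.normSq_mul, Complex.normSq_ofReal, Complex.normSq_ofReal]; ring
          have e3 : 0 ≤ ((a:ℂ) * (1 - w) * (starRingEnd ℂ) ((b':ℂ) * (r:ℂ))).re := by
            have : (starRingEnd ℂ) ((b':ℂ) * (r:ℂ)) = (b':ℂ) * (r:ℂ) := by
              simp [Complex.conj_ofReal]
            rw [this]
            have : ((a:ℂ) * (1 - w) * ((b':ℂ) * (r:ℂ))).re = a * b' * r * (1 - w).re := by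
              have e4 : (a:ℂ) * (1 - w) * ((b':ℂ) * (r:ℂ)) = ((a * b' * r : ℝ):ℂ) * (1 - w) := by
                push_cast; ring
              rw [e4, Complex.re_ofReal_mul]
            rw [this]
            have := disk_re_pos hw
            positivity
          have e5 : a^2 + b'^2 ≥ 1/2 := by nlinarith [sq_nonneg (a - b')]
          nlinarith [sq_nonneg r]
        have := Real.sqrt_le_sqrt hnsq
        rw [Real.sqrt_sq (by positivity)] at this
        rw [← Complex.norm_def] at this
        exact this
      · -- upper bound
        rw [hζ]
        calc ‖((a:ℂ) * (1 - w) + (b':ℂ) * (r:ℂ))‖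
            ≤ ‖((a:ℂ) * (1 - w))‖ + ‖((b':ℂ) * (r:ℂ))‖ :=
              norm_add_le _ _
          _ = a * r + b' * r := by
              rw [norm_mul, norm_mul, Complex.norm_real, Real.norm_eq_abs, Complex.norm_real, Real.norm_eq_abs, Complex.norm_real, Real.norm_eq_abs,
                _root_.abs_of_nonneg ha, _root_.abs_of_nonneg hb', _root_.abs_of_nonneg hr0.le,
                ← hrdef]
          _ = r := by rw [← add_mul, hab, one_mul]
    -- mean value bound on the segment
    have hMVT := Convex.norm_image_sub_le_of_norm_hasDerivWithin_le
      (f := H) (f' := G) (s := segment ℝ w x) (C := M * (r/2)^(e'-1))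
      (fun ζ hζ => (hHd ζ (hsub hζ)).hasDerivWithinAt)
      (fun ζ hζ => by
        have h1 := hGb ζ (hsub hζ) (lt_of_le_of_lt (hseg ζ hζ).2 hwρ)
        have h2 : ‖(1 - ζ)‖ ^ (e'-1) ≤ (r/2) ^ (e'-1) :=
          Real.rpow_le_rpow_of_nonpos (by positivity) (hseg ζ hζ).1 (by linarith)
        calc ‖(G ζ)‖ ≤ M * ‖(1 - ζ)‖ ^ (e'-1) := h1
          _ ≤ M * (r/2) ^ (e'-1) := mul_le_mul_of_nonneg_left h2 hM)
      (convex_segment w x) (left_mem_segment ℝ w x) (right_mem_segment ℝ w x)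
    have hwx : ‖x - w‖ ≤ 2 * r := by
      have e0 : x - w = (x - 1) + (1 - w) := by ring
      calc ‖x - w‖ = ‖((x - 1) + (1 - w))‖ := by rw [e0]
        _ ≤ ‖(x - 1)‖ + ‖(1 - w)‖ := norm_add_le _ _
        _ ≤ 2 * r := by
            have : ‖(x - 1)‖ = r := by
              rw [hxdef, show (1:ℂ) - (r:ℂ) - 1 = -(r:ℂ) by ring, norm_neg,
                Complex.norm_real, Real.norm_eq_abs, _root_.abs_of_nonneg hr0.le]
            rw [this, ← hrdef]
            linarith
    have hhalf : (r/2) ^ (e'-1) ≤ 2 * r ^ (e'-1) := by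
      rw [Real.div_rpow hr0.le (by norm_num : (0:ℝ) ≤ 2)]
      have h2e : (2:ℝ) ^ (-1:ℝ) ≤ (2:ℝ) ^ (e'-1) :=
        Real.rpow_le_rpow_of_exponent_le one_le_two (by linarith)
      have h2e' : (0:ℝ) < (2:ℝ) ^ (e'-1) := Real.rpow_pos_of_pos two_pos _
      rw [div_le_iff₀ h2e']
      have hrp : 0 ≤ r ^ (e'-1) := Real.rpow_nonneg hr0.le _
      have : (1:ℝ)/2 ≤ (2:ℝ) ^ (e'-1) := by
        rw [show (1:ℝ)/2 = (2:ℝ)^(-1:ℝ) by rw [Real.rpow_neg_one]; norm_num]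
        exact h2e
      nlinarith
    have hre : r ^ (e'-1) * r = r ^ e' := by
      rw [← Real.rpow_add_one hr0.ne' (e'-1), sub_add_cancel]
    calc ‖H w - φ r‖ = ‖H x - H w‖ := by rw [norm_sub_rev]
      _ ≤ M * (r/2)^(e'-1) * ‖x - w‖ := hMVT
      _ ≤ M * (2 * r^(e'-1)) * (2*r) := by
          have h1 : 0 ≤ M * (r/2)^(e'-1) := by
            have := Real.rpow_nonneg (by positivity : (0:ℝ) ≤ r/2) (e'-1)
            positivity
          have h2 := mul_le_mul_of_nonneg_left hhalf hM
          have h3 : ‖x - w‖ ≤ 2*r := hwx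
          have h4 : (0:ℝ) ≤ ‖x - w‖ := norm_nonneg _
          nlinarith [Real.rpow_nonneg hr0.le (e'-1)]
      _ = 4 * M * (r ^ (e'-1) * r) := by ring
      _ ≤ 8 * M * r ^ e' := by rw [hre]; nlinarith [Real.rpow_nonneg hr0.le e', hM]
  -- assemble the limit
  refine ⟨C, ?_⟩
  have h1 : Tendsto (fun w : ℂ => ‖(1 - w)‖) (𝓝[unitDisk] 1) (𝓝[>] 0) := by
    rw [tendsto_nhdsWithin_iff]
    constructor
    · have hc : Continuous (fun w : ℂ => ‖(1 - w)‖) :=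
        continuous_norm.comp (continuous_const.sub continuous_id)
      have := hc.tendsto 1
      simp only [sub_self, norm_zero] at this
      exact this.mono_left nhdsWithin_le_nhds
    · exact eventually_mem_nhdsWithin.mono fun w hw =>
        Set.mem_Ioi.mpr (norm_pos_iff.mpr (disk_ne_one hw))
  have h2 : Tendsto (fun w : ℂ => φ (‖(1 - w)‖)) (𝓝[unitDisk] 1) (𝓝 C) :=
    hC.comp h1
  have hev : ∀ᶠ w in 𝓝[unitDisk] (1:ℂ), ‖(1 - w)‖ < ρ₀ ∧ w ∈ unitDisk := by
    have hev1 : ∀ᶠ w in 𝓝[unitDisk] (1:ℂ), ‖(1 - w)‖ < ρ₀ :=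
      (h1.mono_right nhdsWithin_le_nhds).eventually (eventually_lt_nhds hρ₀)
    exact hev1.and eventually_mem_nhdsWithin
  have h3 : Tendsto (fun w : ℂ => H w - φ (‖(1 - w)‖)) (𝓝[unitDisk] 1) (𝓝 0) := by
    have htend : Tendsto (fun w : ℂ => 8 * M * ‖(1 - w)‖ ^ e') (𝓝[unitDisk] 1)
        (𝓝 0) := by
      have := ((rpow_tendsto_zero he').comp h1).const_mul (8*M)
      simpa [Function.comp] using this
    refine squeeze_zero_norm' ?_ htend
    filter_upwards [hev] with w hw
    exact claim3 w hw.2 hw.1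
  have := h3.add h2
  simp only [sub_add_cancel, zero_add] at this
  exact this


lemma koenigs_traj {F : ℝ → ℂ → ℂ} {f h : ℂ → ℂ}
    (hsg : IsContinuousSemigroupOnDisk F f) (hnz : ∀ z ∈ unitDisk, f z ≠ 0)
    (hK : IsKoenigsFunction f h) {z : ℂ} (hz : z ∈ unitDisk) :
    ∀ t : ℝ, 0 ≤ t → h (F t z) = h z + t := by
  intro T hT
  have key : ∀ y ∈ Icc (0:ℝ) T, (fun s => h (F s z)) y = (fun s : ℝ => h z + s) y := by
    apply eq_of_has_deriv_right_eq (f' := fun _ => (1:ℂ))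
    · intro x hx
      have hx0 : (0:ℝ) ≤ x := hx.1
      have hw : F x z ∈ unitDisk := hsg.mapsTo x hx0 hz
      have d1 : HasDerivWithinAt (fun s : ℝ => F s z) (-(f (F x z))) (Ici (0:ℝ)) x :=
        hsg.ode z hz x hx0
      have d1' : HasDerivWithinAt (fun s : ℝ => F s z) (-(f (F x z))) (Ici x) x :=
        d1.mono (Ici_subset_Ici.mpr hx0)
      have d2 : HasDerivAt h (-(1 / f (F x z))) (F x z) := hK.1 _ hw
      have := d2.comp_hasDerivWithinAt x d1'
      have heq : (-(1 / f (F x z))) * (-(f (F x z))) = 1 := by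
        field_simp [hnz _ hw]
      rw [heq] at this
      exact this
    · intro x _
      have : HasDerivAt (fun s : ℝ => h z + (s:ℂ)) 1 x := by
        simpa using (Complex.ofRealCLM.hasDerivAt (x := x)).const_add (h z)
      exact this.hasDerivWithinAt
    · intro x hx
      have hx0 : (0:ℝ) ≤ x := hx.1
      have hw : F x z ∈ unitDisk := hsg.mapsTo x hx0 hz
      have hc : ContinuousWithinAt (fun s : ℝ => F s z) (Icc 0 T) x :=
        ((hsg.ode z hz x hx0).continuousWithinAt).mono Icc_subset_Ici_self
      exact ContinuousAt.comp_continuousWithinAt (f := fun s : ℝ => F s z)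
        (hK.1 _ hw).continuousAt hc
    · exact (continuous_const.add Complex.continuous_ofReal).continuousOn
    · simp [hsg.init z hz]
  have := key T ⟨hT, le_refl T⟩
  simpa using this


theorem stmt9 (F : ℝ → ℂ → ℂ) (f h : ℂ → ℂ) (b c : ℂ) (ε : ℝ)
    (hsg : IsContinuousSemigroupOnDisk F f)
    (hdw : HasDWPointOne F)
    (hnz : ∀ z ∈ unitDisk, f z ≠ 0)
    (hb : b ≠ 0) (hε : 0 < ε)
    (hrep : Tendsto
      (fun z : ℂ => (f z - b * (z - 1) ^ 2 - c * (z - 1) ^ 3) / (z - 1) ^ ((3 + ε : ℝ) : ℂ))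
      (𝓝[unitDisk] (1 : ℂ)) (𝓝 0))
    (hK : IsKoenigsFunction f h) :
    ∃ A : ℂ, ∀ z ∈ unitDisk,
      Tendsto (fun t : ℝ =>
          1 / (1 - F t z) + b * (t : ℂ) + (c / b) * (Real.log (t + 1) : ℂ) + b * h z)
        atTop (𝓝 A) := by
  have hbpos : 0 < ‖b‖ := norm_pos_iff.mpr hb
  set H : ℂ → ℂ := fun ζ => h ζ + 1 / (b * (1 - ζ)) - c / b ^ 2 * Complex.log (1 - ζ) with hHdef
  set G : ℂ → ℂ := fun ζ => -(1 / f ζ) + b / (b * (1 - ζ)) ^ 2 + c / b ^ 2 * (1 - ζ)⁻¹ with hGdef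
  have hHd : ∀ w ∈ unitDisk, HasDerivAt H (G w) w := fun w hw => Hderiv hb hK.1 hw
  -- the remainder bound coming from the representation of the generator
  have hδev : ∀ᶠ w in 𝓝[unitDisk] (1:ℂ),
      ‖(f w - b * (1 - w) ^ 2 + c * (1 - w) ^ 3)‖ ≤ ‖(1 - w)‖ ^ (3 + ε) := by
    have h1 : ∀ᶠ w in 𝓝[unitDisk] (1:ℂ),
        ‖(f w - b * (w - 1) ^ 2 - c * (w - 1) ^ 3) / (w - 1) ^ ((3 + ε : ℝ) : ℂ)‖ < 1 := by
      have := Metric.tendsto_nhds.mp hrep 1 one_pos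
      filter_upwards [this] with w hw
      rwa [dist_zero_right] at hw
    filter_upwards [h1, eventually_mem_nhdsWithin] with w hw1 hw2
    have hwne : w - 1 ≠ 0 := by
      have := disk_ne_one hw2
      intro hh
      apply this
      linear_combination -hh
    have habs : ‖((w - 1) ^ ((3 + ε : ℝ) : ℂ))‖ = ‖(1 - w)‖ ^ (3 + ε) := by
      rw [Complex.norm_cpow_of_ne_zero hwne]
      simp only [Complex.ofReal_re, Complex.ofReal_im, zero_mul, mul_zero, Real.exp_zero, div_one]
      congr 1
      rw [show (1:ℂ) - w = -(w - 1) by ring, norm_neg]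
    have hpos : 0 < ‖(1 - w)‖ ^ (3 + ε) :=
      Real.rpow_pos_of_pos (norm_pos_iff.mpr (disk_ne_one hw2)) _
    have h2 : ‖(f w - b * (w - 1) ^ 2 - c * (w - 1) ^ 3)‖ ≤
        ‖(1 - w)‖ ^ (3 + ε) := by
      rw [norm_div, habs, div_lt_one hpos] at hw1
      exact hw1.le
    have heq : f w - b * (w - 1) ^ 2 - c * (w - 1) ^ 3 =
        f w - b * (1 - w) ^ 2 + c * (1 - w) ^ 3 := by ring
    rwa [heq] at h2
  obtain ⟨ρ, hρpos, hρ⟩ : ∃ ρ > 0, ∀ w ∈ unitDisk, ‖(1 - w)‖ < ρ →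
      ‖(f w - b * (1 - w) ^ 2 + c * (1 - w) ^ 3)‖ ≤ ‖(1 - w)‖ ^ (3 + ε) := by
    rw [eventually_nhdsWithin_iff, Metric.eventually_nhds_iff] at hδev
    obtain ⟨ρ, hρpos, hball⟩ := hδev
    refine ⟨ρ, hρpos, fun w hw hwr => ?_⟩
    have hd : dist w 1 < ρ := by
      rw [Complex.dist_eq, show w - 1 = -(1 - w) by ring, norm_neg]
      exact hwr
    exact hball hd hw
  -- bound on G
  set M : ℝ := 2 * (‖c‖ ^ 2 + ‖b‖ + ‖c‖) / ‖b‖ ^ 3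
    with hMdef
  have hM : 0 ≤ M := by positivity
  set ρ₀ : ℝ := min ρ (min 1 (‖b‖ / (2 * (‖c‖ + 1)))) with hρ₀def
  have hρ₀pos : 0 < ρ₀ := by
    have : 0 < ‖b‖ / (2 * (‖c‖ + 1)) := by positivity
    simp only [hρ₀def, lt_min_iff]
    exact ⟨hρpos, by norm_num, this⟩
  have hρ₀1 : ρ₀ ≤ 1 := (min_le_right _ _).trans (min_le_left _ _)
  have hGb : ∀ w ∈ unitDisk, ‖(1 - w)‖ < ρ₀ →
      ‖(G w)‖ ≤ M * ‖(1 - w)‖ ^ (min ε 1 - 1) := by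
    intro w hw hwr
    exact Gbound_pt hb hε (disk_ne_one hw) (hnz w hw)
      (lt_of_lt_of_le hwr ((min_le_right _ _).trans (min_le_left _ _)))
      (lt_of_lt_of_le hwr ((min_le_right _ _).trans (min_le_right _ _)))
      (hρ w hw (lt_of_lt_of_le hwr (min_le_left _ _)))
  have he'pos : 0 < min ε 1 := lt_min hε one_pos
  have he'1 : min ε 1 ≤ 1 := min_le_right _ _
  obtain ⟨C, hC⟩ := H_limit hρ₀pos hρ₀1 he'pos he'1 hM hHd hGb
  refine ⟨b * C + (c / b) * Complex.log (-1 / b), ?_⟩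
  intro z hz
  have hA := koenigs_traj hsg hnz hK hz
  have hwmem : ∀ᶠ t : ℝ in atTop, F t z ∈ unitDisk :=
    (eventually_ge_atTop 0).mono fun t ht => hsg.mapsTo t ht hz
  have hwt : Tendsto (fun t : ℝ => F t z) atTop (𝓝[unitDisk] 1) :=
    tendsto_nhdsWithin_iff.mpr ⟨hdw z hz, hwmem⟩
  have hHlim : Tendsto (fun t : ℝ => H (F t z)) atTop (𝓝 C) := hC.comp hwt
  have hu0 : Tendsto (fun t : ℝ => 1 - F t z) atTop (𝓝 0) := by
    have := (hdw z hz).const_sub (1:ℂ)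
    simpa using this
  have hune : ∀ᶠ t : ℝ in atTop, (1:ℂ) - F t z ≠ 0 := hwmem.mono fun t ht => disk_ne_one ht
  have hzlog := zlogz_tendsto hune hu0
  -- (t+1)(1 - F t z) → -1/b
  have hq : Tendsto (fun t : ℝ => ((t:ℂ) + 1) * (1 - F t z)) atTop (𝓝 (-1 / b)) := by
    have hident : ∀ᶠ t : ℝ in atTop, ((t:ℂ) + 1) * (1 - F t z) =
        (H (F t z) - h z + 1) * (1 - F t z) +
          c / b ^ 2 * ((1 - F t z) * Complex.log (1 - F t z)) - 1 / b := by
      filter_upwards [eventually_ge_atTop 0, hwmem, hune] with t ht hmem hne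
      have hht : h (F t z) = h z + t := hA t ht
      have hHt : H (F t z) = h (F t z) + 1 / (b * (1 - F t z)) -
          c / b ^ 2 * Complex.log (1 - F t z) := rfl
      have hh : (t:ℂ) = H (F t z) - h z - 1 / (b * (1 - F t z)) +
          c / b ^ 2 * Complex.log (1 - F t z) := by
        rw [hHt, hht]; ring
      rw [hh]
      field_simp
      ring
    have hlim : Tendsto (fun t : ℝ => (H (F t z) - h z + 1) * (1 - F t z) +
        c / b ^ 2 * ((1 - F t z) * Complex.log (1 - F t z)) - 1 / b) atTop
        (𝓝 (((C - h z + 1) * 0 + c / b ^ 2 * 0) - 1 / b)) :=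
      Tendsto.sub_const ((((hHlim.sub_const (h z)).add_const 1).mul hu0).add
        (hzlog.const_mul (c / b ^ 2))) (1 / b)
    have : (((C - h z + 1) * 0 + c / b ^ 2 * 0) - 1 / b) = -1 / b := by ring
    rw [this] at hlim
    exact Tendsto.congr' (hident.mono fun t ht => ht.symm) hlim
  -- -1/b lies in the slit plane
  have hreq : 0 ≤ (-1 / b).re := by
    have hqre : Tendsto (fun t : ℝ => (((t:ℂ) + 1) * (1 - F t z)).re) atTop (𝓝 ((-1 / b).re)) :=
      (Complex.continuous_re.tendsto _).comp hq
    refine ge_of_tendsto hqre ?_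
    filter_upwards [eventually_ge_atTop 0, hwmem] with t ht hmem
    have hcast : ((t:ℂ) + 1) = (((t + 1 : ℝ)) : ℂ) := by push_cast; ring
    rw [hcast, Complex.re_ofReal_mul]
    have h1 := disk_re_pos hmem
    positivity
  have hslit : -1 / b ∈ Complex.slitPlane := by
    rcases eq_or_lt_of_le hreq with hre | hre
    · refine Complex.mem_slitPlane_iff.mpr (Or.inr ?_)
      intro him
      have : (-1 / b) = 0 := Complex.ext (by simp [← hre]) (by simp [him])
      rw [div_eq_zero_iff] at this
      rcases this with h' | h'
      · exact one_ne_zero (neg_eq_zero.mp h')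
      · exact hb h'
    · exact Complex.mem_slitPlane_iff.mpr (Or.inl hre)
  have hlog : Tendsto (fun t : ℝ => Complex.log (((t:ℂ) + 1) * (1 - F t z))) atTop
      (𝓝 (Complex.log (-1 / b))) := hq.clog hslit
  -- final identification
  have hfinal : ∀ᶠ t : ℝ in atTop,
      1 / (1 - F t z) + b * (t:ℂ) + (c / b) * (Real.log (t + 1) : ℂ) + b * h z =
        b * H (F t z) + (c / b) * Complex.log (((t:ℂ) + 1) * (1 - F t z)) := by
    filter_upwards [eventually_ge_atTop 0, hwmem, hune] with t ht hmem hne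
    have hht : h (F t z) = h z + t := hA t ht
    have hcast : ((t:ℂ) + 1) = (((t + 1 : ℝ)) : ℂ) := by push_cast; ring
    have hlogmul : Complex.log ((((t + 1 : ℝ)) : ℂ) * (1 - F t z)) =
        (Real.log (t + 1) : ℂ) + Complex.log (1 - F t z) :=
      Complex.log_ofReal_mul (by linarith) hne
    rw [hcast, hlogmul]
    have hHt : H (F t z) = h (F t z) + 1 / (b * (1 - F t z)) -
        c / b ^ 2 * Complex.log (1 - F t z) := rfl
    rw [hHt, hht]
    field_simp
    ring
  have hmain : Tendsto (fun t : ℝ => b * H (F t z) +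
      (c / b) * Complex.log (((t:ℂ) + 1) * (1 - F t z))) atTop
      (𝓝 (b * C + (c / b) * Complex.log (-1 / b))) :=
    (hHlim.const_mul b).add (hlog.const_mul (c / b))
  exact Tendsto.congr' (hfinal.mono fun t ht => ht.symm) hmain
end
end

section
/- Let (Φ_t)_{t≥0} be a continuous one-parameter semigroup on the right half-plane Π with Denjoy–Wolff point at ∞, generated by −φ, where φ admits the representation φ(w) = β + ϱ(w) with β ∈ ℂ and ϱ(w) → 0 as |w| → ∞, w ∈ Π. Then for every w ∈ Π, lim_{t→∞} Φ_t(w)/t = β. -/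
open Complex Filter Topology Set MeasureTheory

noncomputable section

/-- The right half-plane in the complex plane. -/
def rightHalfPlane : Set ℂ := {w : ℂ | 0 < w.re}

/-- A continuous one-parameter semigroup `Φ` on the right half-plane generated by `-φ`,
where `Re φ ≥ 0`: each `Φ t` is a holomorphic self-map of the half-plane, `Φ 0 = id`,
`Φ (t+s) = Φ t ∘ Φ s`, and for each `w` the trajectory `t ↦ Φ t w` solves
`∂Φ_t(w)/∂t = φ(Φ_t(w))`. -/
structure IsContinuousSemigroupOnHalfPlane (Φ : ℝ → ℂ → ℂ) (φ : ℂ → ℂ) : Prop where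
  mapsTo : ∀ t : ℝ, 0 ≤ t → Set.MapsTo (Φ t) rightHalfPlane rightHalfPlane
  holomorphic : ∀ t : ℝ, 0 ≤ t → DifferentiableOn ℂ (Φ t) rightHalfPlane
  init : ∀ w ∈ rightHalfPlane, Φ 0 w = w
  semigroup : ∀ t s : ℝ, 0 ≤ t → 0 ≤ s → ∀ w ∈ rightHalfPlane, Φ (t + s) w = Φ t (Φ s w)
  gen_holomorphic : DifferentiableOn ℂ φ rightHalfPlane
  gen_re_nonneg : ∀ w ∈ rightHalfPlane, 0 ≤ (φ w).re
  ode : ∀ w ∈ rightHalfPlane, ∀ t : ℝ, 0 ≤ t →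
    HasDerivWithinAt (fun s : ℝ => Φ s w) (φ (Φ t w)) (Set.Ici (0 : ℝ)) t

/-- The semigroup has Denjoy–Wolff point at `∞`. -/
def HasDWPointInfty (Φ : ℝ → ℂ → ℂ) : Prop :=
  ∀ w ∈ rightHalfPlane, Tendsto (fun t : ℝ => ‖Φ t w‖) atTop atTop

/-- The filter of neighbourhoods of `∞` within a set `S ⊆ ℂ`:
`|w| → ∞` with `w ∈ S`. -/
def atInftyWithin (S : Set ℂ) : Filter ℂ :=
  Filter.comap (fun w : ℂ => ‖w‖) Filter.atTop ⊓ Filter.principal S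

/-- `σ` solves `σ' = 1/φ` on the right half-plane with `σ 1 = 0`. -/
def IsSigmaFunction (φ σ : ℂ → ℂ) : Prop :=
  (∀ w ∈ rightHalfPlane, HasDerivAt σ (1 / φ w) w) ∧ σ 1 = 0

lemma cesaro_aux (h : ℝ → ℂ)
    (hint : ∀ t : ℝ, 0 ≤ t → IntervalIntegrable h volume 0 t)
    (hlim : Tendsto h atTop (𝓝 0)) :
    Tendsto (fun t : ℝ => (∫ s in (0:ℝ)..t, h s) / (t : ℂ)) atTop (𝓝 0) := by
  rw [NormedAddCommGroup.tendsto_nhds_zero]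
  intro ε hε
  have h2 : (0:ℝ) < ε / 2 := by linarith
  obtain ⟨T₀, hT₀⟩ := Metric.tendsto_atTop.1 hlim (ε / 2) h2
  set T : ℝ := max T₀ 0 with hTdef
  have hT0 : (0:ℝ) ≤ T := le_max_right _ _
  set C : ℝ := ‖∫ s in (0:ℝ)..T, h s‖ with hCdef
  have hC0 : 0 ≤ C := norm_nonneg _
  rw [eventually_atTop]
  refine ⟨max (T + 1) (2 * C / ε + 1), fun t ht => ?_⟩
  have htT : T + 1 ≤ t := le_trans (le_max_left _ _) ht
  have htC : 2 * C / ε + 1 ≤ t := le_trans (le_max_right _ _) ht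
  have htpos : 0 < t := by linarith
  have hTt : T ≤ t := by linarith
  have hintTt : IntervalIntegrable h volume T t := by
    refine (hint t htpos.le).mono_set ?_
    exact Set.uIcc_subset_uIcc (Set.mem_uIcc.2 (Or.inl ⟨hT0, hTt⟩))
      (Set.mem_uIcc.2 (Or.inl ⟨htpos.le, le_rfl⟩))
  have hsplit : (∫ s in (0:ℝ)..t, h s)
      = (∫ s in (0:ℝ)..T, h s) + ∫ s in T..t, h s :=
    (intervalIntegral.integral_add_adjacent_intervals (hint T hT0) hintTt).symm
  have hbound : ‖∫ s in T..t, h s‖ ≤ ε / 2 * |t - T| := by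
    refine intervalIntegral.norm_integral_le_of_norm_le_const fun x hx => ?_
    rw [Set.uIoc_of_le hTt] at hx
    have : T₀ ≤ x := le_trans (le_max_left _ _) hx.1.le
    have := hT₀ x this
    rw [dist_zero_right] at this
    exact this.le
  have habs : |t - T| = t - T := abs_of_nonneg (by linarith)
  have hnum : ‖∫ s in (0:ℝ)..t, h s‖ ≤ C + ε / 2 * (t - T) := by
    rw [hsplit]
    calc ‖(∫ s in (0:ℝ)..T, h s) + ∫ s in T..t, h s‖
        ≤ ‖∫ s in (0:ℝ)..T, h s‖ + ‖∫ s in T..t, h s‖ := norm_add_le _ _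
      _ ≤ C + ε / 2 * (t - T) := by rw [← hCdef]; rw [habs] at hbound; linarith
  have hnorm : ‖(∫ s in (0:ℝ)..t, h s) / (t : ℂ)‖
      = ‖∫ s in (0:ℝ)..t, h s‖ / t := by
    rw [norm_div, Complex.norm_real, Real.norm_of_nonneg htpos.le]
  rw [hnorm, div_lt_iff₀ htpos]
  have hkey : C < ε / 2 * t := by
    have : ε / 2 * t ≥ ε / 2 * (2 * C / ε + 1) := by
      apply mul_le_mul_of_nonneg_left htC h2.le
    have hεC : ε / 2 * (2 * C / ε) = C := by field_simp
    nlinarith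
  calc ‖∫ s in (0:ℝ)..t, h s‖ ≤ C + ε / 2 * (t - T) := hnum
    _ ≤ C + ε / 2 * t := by nlinarith
    _ < ε * t := by nlinarith

theorem stmt12 (Φ : ℝ → ℂ → ℂ) (φ : ℂ → ℂ) (β : ℂ)
    (hsg : IsContinuousSemigroupOnHalfPlane Φ φ)
    (hdw : HasDWPointInfty Φ)
    (hrep : Tendsto (fun w : ℂ => φ w - β) (atInftyWithin rightHalfPlane) (𝓝 0)) :
    ∀ w ∈ rightHalfPlane,
      Tendsto (fun t : ℝ => Φ t w / (t : ℂ)) atTop (𝓝 β) := by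
  intro w hw
  set f : ℝ → ℂ := fun t => Φ t w with hfdef
  set g : ℝ → ℂ := fun s => φ (f s) with hgdef
  have hf_mem : ∀ t : ℝ, 0 ≤ t → f t ∈ rightHalfPlane := fun t ht => hsg.mapsTo t ht hw
  have hf_cont : ContinuousOn f (Set.Ici 0) := fun x hx =>
    (hsg.ode w hw x hx).continuousWithinAt
  have hg_cont : ContinuousOn g (Set.Ici 0) :=
    hsg.gen_holomorphic.continuousOn.comp hf_cont fun x hx => hf_mem x hx
  have hint : ∀ t : ℝ, 0 ≤ t → IntervalIntegrable g volume 0 t := fun t ht =>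
    (hg_cont.mono (by rw [Set.uIcc_of_le ht]; exact Set.Icc_subset_Ici_self)).intervalIntegrable
  have hftc : ∀ t : ℝ, 0 ≤ t → (∫ s in (0:ℝ)..t, g s) = f t - w := by
    intro t ht
    have hderiv : ∀ x ∈ Set.Ioo (0:ℝ) t, HasDerivWithinAt f (g x) (Set.Ioi x) x := fun x hx =>
      ((hsg.ode w hw x hx.1.le).hasDerivAt (Ici_mem_nhds hx.1)).hasDerivWithinAt
    have := intervalIntegral.integral_eq_sub_of_hasDeriv_right_of_le ht
      (hf_cont.mono Set.Icc_subset_Ici_self) hderiv (hint t ht)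
    rw [this, hfdef]
    simp [hsg.init w hw]
  have hlim : Tendsto (fun s : ℝ => g s - β) atTop (𝓝 0) := by
    have hto : Tendsto f atTop (atInftyWithin rightHalfPlane) := by
      rw [atInftyWithin]
      refine tendsto_inf.2 ⟨tendsto_comap_iff.2 (hdw w hw), tendsto_principal.2 ?_⟩
      exact eventually_atTop.2 ⟨0, hf_mem⟩
    exact hrep.comp hto
  have hint2 : ∀ t : ℝ, 0 ≤ t → IntervalIntegrable (fun s => g s - β) volume 0 t :=
    fun t ht => (hint t ht).sub intervalIntegrable_const
  have hces := cesaro_aux (fun s => g s - β) hint2 hlim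
  have hI : ∀ t : ℝ, 0 ≤ t → (∫ s in (0:ℝ)..t, (g s - β)) = f t - w - (t : ℂ) * β := by
    intro t ht
    rw [intervalIntegral.integral_sub (hint t ht) intervalIntegrable_const,
      hftc t ht, intervalIntegral.integral_const]
    simp [Complex.real_smul]
  have hw0 : Tendsto (fun t : ℝ => w / (t : ℂ)) atTop (𝓝 0) := by
    have h1 : Tendsto (fun t : ℝ => ((t⁻¹ : ℝ) : ℂ)) atTop (𝓝 0) := by
      have := (Complex.continuous_ofReal.tendsto 0).comp tendsto_inv_atTop_zero
      simpa [Function.comp_def] using this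
    have := h1.const_mul w
    simpa [div_eq_mul_inv, Complex.ofReal_inv] using this
  have hfinal : Tendsto (fun t : ℝ => w / (t : ℂ) + β + (∫ s in (0:ℝ)..t, (g s - β)) / (t : ℂ))
      atTop (𝓝 β) := by
    have := (hw0.add (tendsto_const_nhds (x := β))).add hces
    simpa using this
  refine hfinal.congr' ?_
  filter_upwards [eventually_gt_atTop (0:ℝ)] with t ht
  have htc : (t : ℂ) ≠ 0 := Complex.ofReal_ne_zero.2 ht.ne'
  rw [hI t ht.le]
  show w / (t : ℂ) + β + (f t - w - (t : ℂ) * β) / (t : ℂ) = f t / (t : ℂ)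
  field_simp
  ring
end
end
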